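/- arXiv:2112.07137 — 7 statements merged into one kernel-verified Lean document; each statement's English description precedes it below -/
import Mathlib

section
/- Let n be a positive integer and let g₁, g₂, v ∈ F₂[x] be polynomials of degree less than n such that g₁ divides xⁿ−1, g₂ divides xⁿ−1, gcd(g₁, g₂) = 1 and gcd(v−1, xⁿ−1) = 1. Then the two-generator quasi-cyclic code C(g₁,g₂,v) ⊆ F₂^{2n} has F₂-dimension 2n − deg(g₁) − deg(g₂). -/
open Polynomial

/-- The coefficient-vector map `[g] = (g₀, …, g_{n−1}) ∈ F₂ⁿ` (as a linear map). -/
noncomputable def vecL (n : ℕ) : Polynomial (ZMod 2) →ₗ[ZMod 2] (Fin n → ZMod 2) :=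
  LinearMap.pi fun i => Polynomial.lcoeff (ZMod 2) (i : ℕ)

/-- The linear map `(a, b) ↦ ([a·v·g₁ + b·g₂ mod xⁿ−1], [a·g₁ + b·v·g₂ mod xⁿ−1])`. -/
noncomputable def cwL (n : ℕ) (g₁ g₂ v : Polynomial (ZMod 2)) :
    (Polynomial (ZMod 2) × Polynomial (ZMod 2)) →ₗ[ZMod 2]
      ((Fin n → ZMod 2) × (Fin n → ZMod 2)) :=
  LinearMap.prod
    ((vecL n).comp ((Polynomial.modByMonicHom (X ^ n - 1)).comp
      ((LinearMap.mulRight (ZMod 2) (v * g₁)).comp (LinearMap.fst (ZMod 2) _ _) +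
       (LinearMap.mulRight (ZMod 2) g₂).comp (LinearMap.snd (ZMod 2) _ _))))
    ((vecL n).comp ((Polynomial.modByMonicHom (X ^ n - 1)).comp
      ((LinearMap.mulRight (ZMod 2) g₁).comp (LinearMap.fst (ZMod 2) _ _) +
       (LinearMap.mulRight (ZMod 2) (v * g₂)).comp (LinearMap.snd (ZMod 2) _ _))))

/-- The two-generator quasi-cyclic code
`C(g₁,g₂,v) = { ([a·v·g₁ + b·g₂ mod xⁿ−1], [a·g₁ + b·v·g₂ mod xⁿ−1]) : a, b ∈ F₂[x] } ⊆ F₂^{2n}`,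
where `F₂^{2n}` is identified with `F₂ⁿ × F₂ⁿ`. -/
noncomputable def QCCode (n : ℕ) (g₁ g₂ v : Polynomial (ZMod 2)) :
    Submodule (ZMod 2) ((Fin n → ZMod 2) × (Fin n → ZMod 2)) :=
  LinearMap.range (cwL n g₁ g₂ v)

/-- Euclidean inner product on `F₂ⁿ`. -/
def einner (n : ℕ) (u w : Fin n → ZMod 2) : ZMod 2 := ∑ i, u i * w i

/-- Symplectic inner product `⟨u,w⟩ₛ = Σᵢ (uᵢ w_{n+i} − u_{n+i} wᵢ)` on `F₂ⁿ × F₂ⁿ ≅ F₂^{2n}`. -/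
def sinner (n : ℕ) (u w : (Fin n → ZMod 2) × (Fin n → ZMod 2)) : ZMod 2 :=
  ∑ i, (u.1 i * w.2 i - u.2 i * w.1 i)

/-- Symplectic dual `C^⊥ₛ = {w : ⟨u,w⟩ₛ = 0 for all u ∈ C}` of a linear code `C ⊆ F₂^{2n}`. -/
noncomputable def sympDual (n : ℕ)
    (C : Submodule (ZMod 2) ((Fin n → ZMod 2) × (Fin n → ZMod 2))) :
    Submodule (ZMod 2) ((Fin n → ZMod 2) × (Fin n → ZMod 2)) where
  carrier := {w | ∀ u ∈ C, sinner n u w = 0}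
  zero_mem' := by intro u _; simp [sinner]
  add_mem' := by
    intro w w' hw hw' u hu
    have h : sinner n u (w + w') = sinner n u w + sinner n u w' := by
      simp only [sinner, Prod.fst_add, Prod.snd_add, Pi.add_apply]
      rw [← Finset.sum_add_distrib]
      exact Finset.sum_congr rfl fun i _ => by ring
    rw [h, hw u hu, hw' u hu, add_zero]
  smul_mem' := by
    intro c w hw u hu
    have h : sinner n u (c • w) = c * sinner n u w := by
      simp only [sinner, Prod.smul_fst, Prod.smul_snd, Pi.smul_apply, smul_eq_mul,
        Finset.mul_sum]
      exact Finset.sum_congr rfl fun i _ => by ring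
    rw [h, hw u hu, mul_zero]

/-- Symplectic weight `wₛ(u) = #{i : (uᵢ, u_{n+i}) ≠ (0,0)}` on `F₂ⁿ × F₂ⁿ ≅ F₂^{2n}`. -/
def sympWt (n : ℕ) (u : (Fin n → ZMod 2) × (Fin n → ZMod 2)) : ℕ :=
  (Finset.univ.filter fun i : Fin n => (u.1 i, u.2 i) ≠ ((0 : ZMod 2), (0 : ZMod 2))).card

/-- For `f` of degree `< n`, the polynomial `f̄ = f₀ + f_{n−1}x + f_{n−2}x² + ⋯ + f₁x^{n−1}`. -/
noncomputable def barPoly (n : ℕ) (f : Polynomial (ZMod 2)) : Polynomial (ZMod 2) :=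
  ∑ i ∈ Finset.range n, Polynomial.C (f.coeff (if i = 0 then 0 else n - i)) * Polynomial.X ^ i

/-- The linear map `(c, d) ↦ ([c·G₁ + d·V·G₂ mod xⁿ−1], [c·V·G₁ + d·G₂ mod xⁿ−1])`;
with `G₁ = g₁^⊥`, `G₂ = g₂^⊥` and `V = v̄` its range is the claimed symplectic dual code. -/
noncomputable def dualCwL (n : ℕ) (G₁ G₂ V : Polynomial (ZMod 2)) :
    (Polynomial (ZMod 2) × Polynomial (ZMod 2)) →ₗ[ZMod 2]
      ((Fin n → ZMod 2) × (Fin n → ZMod 2)) :=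
  LinearMap.prod
    ((vecL n).comp ((Polynomial.modByMonicHom (X ^ n - 1)).comp
      ((LinearMap.mulRight (ZMod 2) G₁).comp (LinearMap.fst (ZMod 2) _ _) +
       (LinearMap.mulRight (ZMod 2) (V * G₂)).comp (LinearMap.snd (ZMod 2) _ _))))
    ((vecL n).comp ((Polynomial.modByMonicHom (X ^ n - 1)).comp
      ((LinearMap.mulRight (ZMod 2) (V * G₁)).comp (LinearMap.fst (ZMod 2) _ _) +
       (LinearMap.mulRight (ZMod 2) G₂).comp (LinearMap.snd (ZMod 2) _ _))))


open Polynomial in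
private lemma vecL_eq_zero {n : ℕ} {p : Polynomial (ZMod 2)} (hp : p.degree < (n : WithBot ℕ))
    (h : vecL n p = 0) : p = 0 := by
  ext i
  by_cases hi : i < n
  · have := congrFun h ⟨i, hi⟩
    simpa [vecL, LinearMap.pi_apply, lcoeff_apply] using this
  · exact coeff_eq_zero_of_degree_lt (hp.trans_le (by exact_mod_cast Nat.le_of_not_lt hi))

open Polynomial in
private lemma mod_eq_of_dvd {q p₁ p₂ : Polynomial (ZMod 2)} (hq : q.Monic)
    (H : q ∣ p₁ - p₂) : p₁ %ₘ q = p₂ %ₘ q := by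
  have h0 := (Polynomial.modByMonic_eq_zero_iff_dvd hq).2 H
  have h2 : (p₁ - p₂) %ₘ q = p₁ %ₘ q - p₂ %ₘ q := map_sub (Polynomial.modByMonicHom q) p₁ p₂
  rw [h2] at h0
  exact sub_eq_zero.mp h0

open Polynomial in
private lemma cwL_apply (n : ℕ) (g₁ g₂ v a b : Polynomial (ZMod 2)) :
    cwL n g₁ g₂ v (a, b) =
      (vecL n ((a * (v * g₁) + b * g₂) %ₘ (X ^ n - 1)),
       vecL n ((a * g₁ + b * (v * g₂)) %ₘ (X ^ n - 1))) := rfl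

set_option maxHeartbeats 2000000 in
/-- the two-generator quasi-cyclic code `C(g₁,g₂,v)` has
`F₂`-dimension `2n − deg g₁ − deg g₂`. -/
theorem stmt_0 (n : ℕ) (hn : 0 < n) (g₁ g₂ v : Polynomial (ZMod 2))
    (hdeg₁ : g₁.natDegree < n) (hdeg₂ : g₂.natDegree < n) (hdegv : v.natDegree < n)
    (hdvd₁ : g₁ ∣ X ^ n - 1) (hdvd₂ : g₂ ∣ X ^ n - 1)
    (hcop : IsCoprime g₁ g₂) (hvcop : IsCoprime (v - 1) (X ^ n - 1)) :
    Module.finrank (ZMod 2) ↥(QCCode n g₁ g₂ v) =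
      2 * n - g₁.natDegree - g₂.natDegree := by
  classical
  set h : Polynomial (ZMod 2) := X ^ n - 1 with hh
  have h1C : (1 : Polynomial (ZMod 2)) = C 1 := C_1.symm
  have hmon : h.Monic := by rw [hh, h1C]; exact monic_X_pow_sub_C 1 hn.ne'
  have hne : h ≠ 0 := hmon.ne_zero
  have hdegh : h.natDegree = n := by rw [hh, h1C]; exact natDegree_X_pow_sub_C
  have hdegh' : h.degree = (n : WithBot ℕ) := by
    rw [degree_eq_natDegree hne, hdegh]
  obtain ⟨h₁, hfac₁⟩ := hdvd₁
  obtain ⟨h₂, hfac₂⟩ := hdvd₂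
  have hg₁ : g₁ ≠ 0 := by rintro rfl; exact hne (by rw [hfac₁, zero_mul])
  have hg₂ : g₂ ≠ 0 := by rintro rfl; exact hne (by rw [hfac₂, zero_mul])
  have hh₁ : h₁ ≠ 0 := by rintro rfl; exact hne (by rw [hfac₁, mul_zero])
  have hh₂ : h₂ ≠ 0 := by rintro rfl; exact hne (by rw [hfac₂, mul_zero])
  set d₁ := g₁.natDegree with hd₁
  set d₂ := g₂.natDegree with hd₂
  have hdsum₁ : d₁ + h₁.natDegree = n := by
    rw [← hdegh, hfac₁, natDegree_mul hg₁ hh₁]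
  have hdsum₂ : d₂ + h₂.natDegree = n := by
    rw [← hdegh, hfac₂, natDegree_mul hg₂ hh₂]
  have hchar : (1 : Polynomial (ZMod 2)) + 1 = 0 := by
    have h2 : ((1 : ZMod 2) + 1) = 0 := by decide
    rw [← C_1, ← C_add, h2, C_0]
  have hneg1 : -(1 : Polynomial (ZMod 2)) = 1 := neg_eq_of_add_eq_zero_left hchar
  have hvadd : v + 1 = v - 1 := by rw [sub_eq_add_neg, hneg1]
  have hvcop2 : IsCoprime ((v - 1) * (v + 1)) h := by
    rw [hvadd]; exact hvcop.mul_left hvcop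
  set ι : (↥(Polynomial.degreeLT (ZMod 2) n) × ↥(Polynomial.degreeLT (ZMod 2) n)) →ₗ[ZMod 2]
      (Polynomial (ZMod 2) × Polynomial (ZMod 2)) :=
    ((Polynomial.degreeLT (ZMod 2) n).subtype).prodMap
      ((Polynomial.degreeLT (ZMod 2) n).subtype) with hι
  set Φ := (cwL n g₁ g₂ v).comp ι with hΦ
  have hΦap : ∀ (a b : Polynomial (ZMod 2)) (ha : a ∈ Polynomial.degreeLT (ZMod 2) n)
      (hb : b ∈ Polynomial.degreeLT (ZMod 2) n),
      Φ (⟨a, ha⟩, ⟨b, hb⟩) =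
        (vecL n ((a * (v * g₁) + b * g₂) %ₘ h),
         vecL n ((a * g₁ + b * (v * g₂)) %ₘ h)) := by
    intro a b ha hb
    rw [hΦ, hι]
    show cwL n g₁ g₂ v (a, b) = _
    rw [cwL_apply, ← hh]
  have hmodmem : ∀ p : Polynomial (ZMod 2), p %ₘ h ∈ Polynomial.degreeLT (ZMod 2) n :=
    fun p => mem_degreeLT.2 (by rw [← hdegh']; exact degree_modByMonic_lt p hmon)
  have hmlt : ∀ p : Polynomial (ZMod 2), (p %ₘ h).degree < (n : WithBot ℕ) := fun p => by
    rw [← hdegh']; exact degree_modByMonic_lt p hmon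
  -- range of Φ is the code
  have hrange : LinearMap.range Φ = QCCode n g₁ g₂ v := by
    apply le_antisymm
    · rintro x hx
      obtain ⟨⟨⟨a, ha⟩, ⟨b, hb⟩⟩, rfl⟩ := hx
      refine LinearMap.mem_range.2 ⟨(a, b), ?_⟩
      rw [hΦ, hι]; rfl
    · rintro x hx
      simp only [QCCode, LinearMap.mem_range] at hx
      obtain ⟨⟨a, b⟩, rfl⟩ := hx
      refine LinearMap.mem_range.2 ⟨(⟨a %ₘ h, hmodmem a⟩, ⟨b %ₘ h, hmodmem b⟩), ?_⟩
      rw [hΦap]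
      have hdvdmod : ∀ p : Polynomial (ZMod 2), h ∣ (p %ₘ h - p) := fun p =>
        ⟨-(p /ₘ h), by linear_combination modByMonic_add_div p h⟩
      have key : ∀ w₁ w₂ : Polynomial (ZMod 2),
          ((a %ₘ h) * w₁ + (b %ₘ h) * w₂) %ₘ h = (a * w₁ + b * w₂) %ₘ h := by
        intro w₁ w₂
        refine mod_eq_of_dvd hmon ?_
        have e : ((a %ₘ h) * w₁ + (b %ₘ h) * w₂) - (a * w₁ + b * w₂)
            = (a %ₘ h - a) * w₁ + (b %ₘ h - b) * w₂ := by ring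
        rw [e]
        exact dvd_add ((hdvdmod a).mul_right w₁) ((hdvdmod b).mul_right w₂)
      rw [key, key, cwL_apply, ← hh]
  -- kernel characterization
  have hkermem : ∀ x : (↥(Polynomial.degreeLT (ZMod 2) n) × ↥(Polynomial.degreeLT (ZMod 2) n)),
      x ∈ LinearMap.ker Φ ↔
      h₁ ∣ (x.1 : Polynomial (ZMod 2)) ∧ h₂ ∣ (x.2 : Polynomial (ZMod 2)) := by
    rintro ⟨⟨a, ha⟩, ⟨b, hb⟩⟩
    rw [LinearMap.mem_ker, hΦap]
    constructor
    · intro hx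
      have e1 : h ∣ a * (v * g₁) + b * g₂ := by
        rw [← modByMonic_eq_zero_iff_dvd hmon]
        exact vecL_eq_zero (hmlt _) (congrArg Prod.fst hx)
      have e2 : h ∣ a * g₁ + b * (v * g₂) := by
        rw [← modByMonic_eq_zero_iff_dvd hmon]
        exact vecL_eq_zero (hmlt _) (congrArg Prod.snd hx)
      have key1 : h ∣ ((v - 1) * (v + 1)) * (a * g₁) := by
        have e : ((v - 1) * (v + 1)) * (a * g₁)
            = v * (a * (v * g₁) + b * g₂) - (a * g₁ + b * (v * g₂)) := by ring
        rw [e]; exact dvd_sub (e1.mul_left v) e2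
      have key2 : h ∣ ((v - 1) * (v + 1)) * (b * g₂) := by
        have e : ((v - 1) * (v + 1)) * (b * g₂)
            = v * (a * g₁ + b * (v * g₂)) - (a * (v * g₁) + b * g₂) := by ring
        rw [e]; exact dvd_sub (e2.mul_left v) e1
      have hag : h ∣ a * g₁ := hvcop2.symm.dvd_of_dvd_mul_left key1
      have hbg : h ∣ b * g₂ := hvcop2.symm.dvd_of_dvd_mul_left key2
      constructor
      · rw [hfac₁, mul_comm a g₁] at hag
        exact (mul_dvd_mul_iff_left hg₁).1 hag
      · rw [hfac₂, mul_comm b g₂] at hbg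
        exact (mul_dvd_mul_iff_left hg₂).1 hbg
    · rintro ⟨⟨c, hc⟩, ⟨d, hd⟩⟩
      have hc' : a = h₁ * c := hc
      have hd' : b = h₂ * d := hd
      have hag : h ∣ a * g₁ := ⟨c, by rw [hc', hfac₁]; ring⟩
      have hbg : h ∣ b * g₂ := ⟨d, by rw [hd', hfac₂]; ring⟩
      have z1 : (a * (v * g₁) + b * g₂) %ₘ h = 0 := by
        rw [modByMonic_eq_zero_iff_dvd hmon]
        refine dvd_add ?_ hbg
        rw [show a * (v * g₁) = (a * g₁) * v by ring]
        exact hag.mul_right v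
      have z2 : (a * g₁ + b * (v * g₂)) %ₘ h = 0 := by
        rw [modByMonic_eq_zero_iff_dvd hmon]
        refine dvd_add hag ?_
        rw [show b * (v * g₂) = (b * g₂) * v by ring]
        exact hbg.mul_right v
      rw [z1, z2]
      simp [Prod.ext_iff]
  -- the kernel parametrization
  have hres : ∀ (hq : Polynomial (ZMod 2)) (dg : ℕ), hq ≠ 0 → dg + hq.natDegree = n →
      ∀ c ∈ Polynomial.degreeLT (ZMod 2) dg, c * hq ∈ Polynomial.degreeLT (ZMod 2) n := by
    intro hq dg hq0 hsum c hcm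
    rw [mem_degreeLT]
    by_cases hc0 : c = 0
    · rw [hc0, zero_mul, degree_zero]; exact WithBot.bot_lt_coe n
    · have hcd : c.natDegree < dg := (natDegree_lt_iff_degree_lt hc0).2 (mem_degreeLT.1 hcm)
      have hcn : c * hq ≠ 0 := mul_ne_zero hc0 hq0
      rw [← natDegree_lt_iff_degree_lt hcn, natDegree_mul hc0 hq0]
      omega
  set μ₁ : ↥(Polynomial.degreeLT (ZMod 2) d₁) →ₗ[ZMod 2] ↥(Polynomial.degreeLT (ZMod 2) n) :=
    (LinearMap.mulRight (ZMod 2) h₁).restrict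
      (fun c hc => by rw [LinearMap.mulRight_apply]; exact hres h₁ d₁ hh₁ hdsum₁ c hc) with hμ₁
  set μ₂ : ↥(Polynomial.degreeLT (ZMod 2) d₂) →ₗ[ZMod 2] ↥(Polynomial.degreeLT (ZMod 2) n) :=
    (LinearMap.mulRight (ZMod 2) h₂).restrict
      (fun c hc => by rw [LinearMap.mulRight_apply]; exact hres h₂ d₂ hh₂ hdsum₂ c hc) with hμ₂
  set κ := μ₁.prodMap μ₂ with hκ
  have hκcoe : ∀ (c : ↥(Polynomial.degreeLT (ZMod 2) d₁))
      (d : ↥(Polynomial.degreeLT (ZMod 2) d₂)),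
      ((κ (c, d)).1 : Polynomial (ZMod 2)) = (c : Polynomial (ZMod 2)) * h₁ ∧
      ((κ (c, d)).2 : Polynomial (ZMod 2)) = (d : Polynomial (ZMod 2)) * h₂ := by
    intro c d
    rw [hκ, hμ₁, hμ₂]
    constructor <;>
      simp [LinearMap.restrict_apply, LinearMap.mulRight_apply]
  have hκinj : Function.Injective κ := by
    rintro ⟨c, d⟩ ⟨c', d'⟩ hcd
    have h1 := congrArg (fun z : (↥(Polynomial.degreeLT (ZMod 2) n) ×
      ↥(Polynomial.degreeLT (ZMod 2) n)) => (z.1 : Polynomial (ZMod 2))) hcd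
    have h2 := congrArg (fun z : (↥(Polynomial.degreeLT (ZMod 2) n) ×
      ↥(Polynomial.degreeLT (ZMod 2) n)) => (z.2 : Polynomial (ZMod 2))) hcd
    rw [(hκcoe c d).1, (hκcoe c' d').1] at h1
    rw [(hκcoe c d).2, (hκcoe c' d').2] at h2
    have ec : c = c' := Subtype.ext (mul_right_cancel₀ hh₁ h1)
    have ed : d = d' := Subtype.ext (mul_right_cancel₀ hh₂ h2)
    rw [ec, ed]
  have hκrange : LinearMap.range κ = LinearMap.ker Φ := by
    apply le_antisymm
    · rintro x hx
      obtain ⟨⟨c, d⟩, rfl⟩ := hx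
      rw [hkermem]
      exact ⟨(hκcoe c d).1 ▸ dvd_mul_left h₁ c, (hκcoe c d).2 ▸ dvd_mul_left h₂ d⟩
    · rintro ⟨⟨x1, hx1⟩, ⟨x2, hx2⟩⟩ hx
      rw [hkermem] at hx
      obtain ⟨c, hc⟩ := hx.1
      obtain ⟨d, hd⟩ := hx.2
      simp only at hc hd
      have hcE : c ∈ Polynomial.degreeLT (ZMod 2) d₁ := by
        rw [mem_degreeLT]
        by_cases hc0 : c = 0
        · rw [hc0, degree_zero]; exact WithBot.bot_lt_coe d₁
        · have hx1ne : x1 ≠ 0 := by rw [hc]; exact mul_ne_zero hh₁ hc0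
          have hlt : x1.natDegree < n := (natDegree_lt_iff_degree_lt hx1ne).2 (mem_degreeLT.1 hx1)
          rw [hc, natDegree_mul hh₁ hc0] at hlt
          rw [← natDegree_lt_iff_degree_lt hc0]
          omega
      have hdE : d ∈ Polynomial.degreeLT (ZMod 2) d₂ := by
        rw [mem_degreeLT]
        by_cases hd0 : d = 0
        · rw [hd0, degree_zero]; exact WithBot.bot_lt_coe d₂
        · have hx2ne : x2 ≠ 0 := by rw [hd]; exact mul_ne_zero hh₂ hd0
          have hlt : x2.natDegree < n := (natDegree_lt_iff_degree_lt hx2ne).2 (mem_degreeLT.1 hx2)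
          rw [hd, natDegree_mul hh₂ hd0] at hlt
          rw [← natDegree_lt_iff_degree_lt hd0]
          omega
      refine LinearMap.mem_range.2 ⟨(⟨c, hcE⟩, ⟨d, hdE⟩), ?_⟩
      have hco := hκcoe ⟨c, hcE⟩ ⟨d, hdE⟩
      have hc2 : (c : Polynomial (ZMod 2)) * h₁ = x1 := by rw [hc]; ring
      have hd2 : (d : Polynomial (ZMod 2)) * h₂ = x2 := by rw [hd]; ring
      rw [Prod.ext_iff]
      exact ⟨Subtype.ext (hco.1.trans hc2), Subtype.ext (hco.2.trans hd2)⟩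
  -- dimension count
  haveI fin1 : Module.Finite (ZMod 2) ↥(Polynomial.degreeLT (ZMod 2) n) :=
    Module.Finite.equiv (Polynomial.degreeLTEquiv (ZMod 2) n).symm
  haveI fin2 : Module.Finite (ZMod 2) ↥(Polynomial.degreeLT (ZMod 2) d₁) :=
    Module.Finite.equiv (Polynomial.degreeLTEquiv (ZMod 2) d₁).symm
  haveI fin3 : Module.Finite (ZMod 2) ↥(Polynomial.degreeLT (ZMod 2) d₂) :=
    Module.Finite.equiv (Polynomial.degreeLTEquiv (ZMod 2) d₂).symm
  have hfin : ∀ m : ℕ, Module.finrank (ZMod 2) ↥(Polynomial.degreeLT (ZMod 2) m) = m := by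
    intro m
    rw [(Polynomial.degreeLTEquiv (ZMod 2) m).finrank_eq, Module.finrank_pi, Fintype.card_fin]
  have hker : Module.finrank (ZMod 2) ↥(LinearMap.ker Φ) = d₁ + d₂ := by
    rw [← hκrange, LinearMap.finrank_range_of_inj hκinj, Module.finrank_prod, hfin, hfin]
  have hRN := LinearMap.finrank_range_add_finrank_ker Φ
  rw [hker, Module.finrank_prod, hfin] at hRN
  rw [← hrange]
  omega
end

section
/- Let n be a positive integer and let g₁, g₂, v, a, b ∈ F₂[x] with g₁ | xⁿ−1, g₂ | xⁿ−1, gcd(g₁, g₂) = 1 and gcd(v−1, xⁿ−1) = 1. If xⁿ−1 divides a·v·g₁ + b·g₂ and xⁿ−1 divides a·g₁ + b·v·g₂, then xⁿ−1 divides a·g₁ and xⁿ−1 divides b·g₂. Equivalently, the one-generator quasi-cyclic code {([a·v·g₁ mod xⁿ−1],[a·g₁ mod xⁿ−1]) : a ∈ F₂[x]} and the one-generator quasi-cyclic code {([b·g₂ mod xⁿ−1],[b·v·g₂ mod xⁿ−1]) : b ∈ F₂[x]} intersect only in the zero vector of F₂^{2n}. -/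
open Polynomial

lemma two_eq_zero_poly : (2 : Polynomial (ZMod 2)) = 0 := by
  simpa using CharP.cast_eq_zero (Polynomial (ZMod 2)) 2

lemma vecL_inj {n : ℕ} {p q : Polynomial (ZMod 2)}
    (hp : p.degree < (n : ℕ)) (hq : q.degree < (n : ℕ))
    (h : vecL n p = vecL n q) : p = q := by
  ext i
  by_cases hi : i < n
  · have := congrFun h ⟨i, hi⟩
    simpa [vecL] using this
  · push_neg at hi
    rw [Polynomial.coeff_eq_zero_of_degree_lt (lt_of_lt_of_le hp (by exact_mod_cast hi)),
      Polynomial.coeff_eq_zero_of_degree_lt (lt_of_lt_of_le hq (by exact_mod_cast hi))]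

/-- under the stated coprimality conditions, if `xⁿ−1 ∣ a·v·g₁ + b·g₂` and
`xⁿ−1 ∣ a·g₁ + b·v·g₂` then `xⁿ−1 ∣ a·g₁` and `xⁿ−1 ∣ b·g₂`; equivalently, the two
one-generator quasi-cyclic codes intersect only in the zero vector of `F₂^{2n}`. -/
theorem stmt_1 (n : ℕ) (hn : 0 < n) (g₁ g₂ v : Polynomial (ZMod 2))
    (hdvd₁ : g₁ ∣ X ^ n - 1) (hdvd₂ : g₂ ∣ X ^ n - 1)
    (hcop : IsCoprime g₁ g₂) (hvcop : IsCoprime (v - 1) (X ^ n - 1)) :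
    (∀ a b : Polynomial (ZMod 2),
        (X ^ n - 1) ∣ (a * v * g₁ + b * g₂) → (X ^ n - 1) ∣ (a * g₁ + b * v * g₂) →
        (X ^ n - 1) ∣ a * g₁ ∧ (X ^ n - 1) ∣ b * g₂) ∧
    (Set.range (fun a : Polynomial (ZMod 2) =>
        (vecL n ((a * v * g₁) %ₘ (X ^ n - 1)), vecL n ((a * g₁) %ₘ (X ^ n - 1)))) ∩
     Set.range (fun b : Polynomial (ZMod 2) =>
        (vecL n ((b * g₂) %ₘ (X ^ n - 1)), vecL n ((b * v * g₂) %ₘ (X ^ n - 1)))) =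
      {(0 : (Fin n → ZMod 2) × (Fin n → ZMod 2))}) := by
  have hm : (X ^ n - 1 : Polynomial (ZMod 2)).Monic := by
    simpa using monic_X_pow_sub_C (1 : ZMod 2) hn.ne'
  have hdeg : (X ^ n - 1 : Polynomial (ZMod 2)).degree = (n : ℕ) := by
    simpa using degree_X_pow_sub_C hn (1 : ZMod 2)
  have key : ∀ a b : Polynomial (ZMod 2),
      (X ^ n - 1) ∣ (a * v * g₁ + b * g₂) → (X ^ n - 1) ∣ (a * g₁ + b * v * g₂) →
      (X ^ n - 1) ∣ a * g₁ ∧ (X ^ n - 1) ∣ b * g₂ := by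
    intro a b h1 h2
    have hsq : IsCoprime (X ^ n - 1 : Polynomial (ZMod 2)) ((v - 1) ^ 2) :=
      (hvcop.pow_left).symm
    constructor
    · have ha : (X ^ n - 1) ∣ (a * g₁) * (v - 1) ^ 2 := by
        have e : (a * g₁) * (v - 1) ^ 2 =
            v * (a * v * g₁ + b * g₂) - (a * g₁ + b * v * g₂) +
              2 * (a * g₁ - a * v * g₁) := by ring
        rw [e, two_eq_zero_poly, zero_mul, add_zero]
        exact dvd_sub (h1.mul_left v) h2
      exact hsq.dvd_of_dvd_mul_right ha
    · have hb : (X ^ n - 1) ∣ (b * g₂) * (v - 1) ^ 2 := by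
        have e : (b * g₂) * (v - 1) ^ 2 =
            v * (a * g₁ + b * v * g₂) - (a * v * g₁ + b * g₂) +
              2 * (b * g₂ - b * v * g₂) := by ring
        rw [e, two_eq_zero_poly, zero_mul, add_zero]
        exact dvd_sub (h2.mul_left v) h1
      exact hsq.dvd_of_dvd_mul_right hb
  refine ⟨key, ?_⟩
  ext x
  simp only [Set.mem_inter_iff, Set.mem_range, Set.mem_singleton_iff]
  constructor
  · rintro ⟨⟨a, ha⟩, ⟨b, hb⟩⟩
    have h1' : (a * v * g₁) %ₘ (X ^ n - 1) = (b * g₂) %ₘ (X ^ n - 1) := by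
      apply vecL_inj (hdeg ▸ degree_modByMonic_lt _ hm) (hdeg ▸ degree_modByMonic_lt _ hm)
      have := congrArg Prod.fst (ha.trans hb.symm)
      simpa using this
    have h2' : (a * g₁) %ₘ (X ^ n - 1) = (b * v * g₂) %ₘ (X ^ n - 1) := by
      apply vecL_inj (hdeg ▸ degree_modByMonic_lt _ hm) (hdeg ▸ degree_modByMonic_lt _ hm)
      have := congrArg Prod.snd (ha.trans hb.symm)
      simpa using this
    have hdvdmod : ∀ p : Polynomial (ZMod 2), (X ^ n - 1) ∣ (p - p %ₘ (X ^ n - 1)) := by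
      intro p
      refine ⟨p /ₘ (X ^ n - 1), ?_⟩
      linear_combination (modByMonic_add_div p (X ^ n - 1)).symm
    have h1 : (X ^ n - 1) ∣ (a * v * g₁ + b * g₂) := by
      have e : a * v * g₁ + b * g₂ =
          (a * v * g₁ - (a * v * g₁) %ₘ (X ^ n - 1)) +
          (b * g₂ - (b * g₂) %ₘ (X ^ n - 1)) + 2 * ((b * g₂) %ₘ (X ^ n - 1)) := by
        rw [h1']; ring
      rw [e, two_eq_zero_poly, zero_mul, add_zero]
      exact dvd_add (hdvdmod _) (hdvdmod _)
    have h2 : (X ^ n - 1) ∣ (a * g₁ + b * v * g₂) := by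
      have e : a * g₁ + b * v * g₂ =
          (a * g₁ - (a * g₁) %ₘ (X ^ n - 1)) +
          (b * v * g₂ - (b * v * g₂) %ₘ (X ^ n - 1)) + 2 * ((b * v * g₂) %ₘ (X ^ n - 1)) := by
        rw [h2']; ring
      rw [e, two_eq_zero_poly, zero_mul, add_zero]
      exact dvd_add (hdvdmod _) (hdvdmod _)
    obtain ⟨hag, hbg⟩ := key a b h1 h2
    have havg : (X ^ n - 1) ∣ a * v * g₁ := by
      have : a * v * g₁ = v * (a * g₁) := by ring
      rw [this]; exact hag.mul_left v
    have e1 : (a * v * g₁) %ₘ (X ^ n - 1) = 0 := by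
      rwa [Polynomial.modByMonic_eq_zero_iff_dvd hm]
    have e2 : (a * g₁) %ₘ (X ^ n - 1) = 0 := by
      rwa [Polynomial.modByMonic_eq_zero_iff_dvd hm]
    rw [← ha, e1, e2]
    simp
  · rintro rfl
    refine ⟨⟨0, ?_⟩, ⟨0, ?_⟩⟩ <;> simp
end

section
/- Let n be a positive integer, let g₁, g₂, v ∈ F₂[x] have degree less than n with g₁·h₁ = xⁿ−1 and g₂·h₂ = xⁿ−1 for some h₁, h₂ ∈ F₂[x], and set g₁^⊥ = x^{deg h₁}·h₁(1/x), g₂^⊥ = x^{deg h₂}·h₂(1/x). Then for all a, b, c, d ∈ F₂[x], the symplectic inner product of the vector ([a·v·g₁ + b·g₂ mod xⁿ−1], [a·g₁ + b·v·g₂ mod xⁿ−1]) and the vector ([c·g₁^⊥ + d·v̄·g₂^⊥ mod xⁿ−1], [c·v̄·g₁^⊥ + d·g₂^⊥ mod xⁿ−1]) is zero, where v̄ denotes the polynomial v₀ + v_{n−1}x + v_{n−2}x² + ⋯ + v₁x^{n−1}. -/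
open Polynomial

namespace Stmt3Aux
open Finset

noncomputable abbrev Mp (n : ℕ) : Polynomial (ZMod 2) := X ^ n - 1

lemma hMp {n : ℕ} (hn : 0 < n) : (Mp n).Monic := by
  simpa using monic_X_pow_sub_C (1 : ZMod 2) hn.ne'

lemma natDegree_Mp (n : ℕ) : (Mp n).natDegree = n := by
  simpa using (natDegree_X_pow_sub_C (n := n) (r := (1 : ZMod 2)))

lemma Mp_ne_one {n : ℕ} (hn : 0 < n) : Mp n ≠ 1 := by
  intro h
  have := natDegree_Mp n
  rw [h, natDegree_one] at this
  omega

/-- `p(x) ↦ p(x^{n-1})` as a ring hom. -/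
noncomputable def sig (n : ℕ) : Polynomial (ZMod 2) →+* Polynomial (ZMod 2) :=
  eval₂RingHom Polynomial.C (X ^ (n - 1))

lemma sig_C_mul_X_pow (n : ℕ) (c : ZMod 2) (i : ℕ) :
    sig n (C c * X ^ i) = C c * X ^ ((n - 1) * i) := by
  simp [sig, coe_eval₂RingHom, ← pow_mul]

lemma dvd_X_pow_nq_add (n q r : ℕ) : Mp n ∣ X ^ (n * q + r) - X ^ r := by
  have h : (X : Polynomial (ZMod 2)) ^ (n * q + r) - X ^ r
      = ((X ^ n) ^ q - 1 ^ q) * X ^ r := by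
    rw [pow_add, pow_mul]; ring
  rw [h]
  exact ((sub_dvd_pow_sub_pow _ _ q)).mul_right _

lemma dvd_X_pow_modred (n a : ℕ) : Mp n ∣ X ^ a - X ^ (a % n) := by
  have := dvd_X_pow_nq_add n (a / n) (a % n)
  rwa [Nat.div_add_mod] at this

lemma dvd_X_pow_sub {n a b : ℕ} (h : a % n = b % n) :
    Mp n ∣ X ^ a - X ^ b := by
  have h1 := dvd_X_pow_modred n a
  have h2 := dvd_X_pow_modred n b
  rw [h] at h1
  have := h1.sub h2
  simpa using this

/-- termwise congruence core -/
lemma core (n : ℕ) (hn : 0 < n) (cf : ℕ → ZMod 2) :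
    Mp n ∣ (∑ i ∈ range n, C (cf i) * X ^ ((n - 1) * i))
      - (∑ i ∈ range n, C (cf i) * X ^ (if i = 0 then 0 else n - i)) := by
  rw [← Finset.sum_sub_distrib]
  apply Finset.dvd_sum
  intro i hi
  have hi' : i < n := mem_range.mp hi
  have key : ((n - 1) * i) % n = (if i = 0 then 0 else n - i) % n := by
    rcases Nat.eq_zero_or_pos i with h0 | h0
    · simp [h0]
    · have e1 : (n - 1) * i + i = n * i := by
        have hh : n - 1 + 1 = n := Nat.succ_pred_eq_of_pos hn
        calc (n - 1) * i + i = ((n - 1) + 1) * i := by ring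
        _ = n * i := by rw [hh]
      have e2 : i ≤ n * i := Nat.le_mul_of_pos_left i hn
      have e3 : n ≤ n * i := Nat.le_mul_of_pos_right n h0
      have e4 : (n - 1) * i = n * (i - 1) + (n - i) := by
        have e5 : n * (i - 1) = n * i - n := by
          rw [Nat.mul_sub, mul_one]
        omega
      rw [if_neg h0.ne', e4, Nat.mul_add_mod]
  have hfac : C (cf i) * X ^ ((n - 1) * i) - C (cf i) * X ^ (if i = 0 then 0 else n - i)
      = C (cf i) * (X ^ ((n - 1) * i) - X ^ (if i = 0 then 0 else n - i)) := by ring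
  rw [hfac]
  exact (dvd_X_pow_sub key).mul_left _

lemma as_sum_lt {p : Polynomial (ZMod 2)} {n : ℕ} (h : p.natDegree < n) :
    p = ∑ i ∈ range n, C (p.coeff i) * X ^ i := by
  conv_lhs => rw [p.as_sum_range' n h]
  simp [C_mul_X_pow_eq_monomial]

lemma e_invol {n i : ℕ} (hi : i < n) :
    (if (if i = 0 then 0 else n - i) = 0 then 0 else n - (if i = 0 then 0 else n - i)) = i := by
  rcases Nat.eq_zero_or_pos i with h0 | h0
  · simp [h0]
  · rw [if_neg h0.ne']
    have : n - i ≠ 0 := by omega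
    rw [if_neg this]
    omega

lemma reindexE (n : ℕ) (F : ℕ → Polynomial (ZMod 2)) :
    ∑ j ∈ range n, F j = ∑ i ∈ range n, F (if i = 0 then 0 else n - i) := by
  apply Finset.sum_nbij' (fun j => if j = 0 then 0 else n - j) (fun i => if i = 0 then 0 else n - i)
  · intro a ha
    rcases Nat.eq_zero_or_pos a with h0 | h0
    · simpa [h0] using ha
    · rw [if_neg h0.ne']
      have := mem_range.mp ha
      exact mem_range.mpr (by omega)
  · intro a ha
    rcases Nat.eq_zero_or_pos a with h0 | h0
    · simpa [h0] using ha
    · rw [if_neg h0.ne']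
      have := mem_range.mp ha
      exact mem_range.mpr (by omega)
  · intro a ha
    exact e_invol (mem_range.mp ha)
  · intro a ha
    exact e_invol (mem_range.mp ha)
  · intro a ha
    rw [e_invol (mem_range.mp ha)]

lemma bar_eq_sum (n : ℕ) (g : Polynomial (ZMod 2)) :
    barPoly n g = ∑ i ∈ range n, C (g.coeff i) * X ^ (if i = 0 then 0 else n - i) := by
  unfold barPoly
  rw [reindexE n (fun j => C (g.coeff (if j = 0 then 0 else n - j)) * X ^ j)]
  apply Finset.sum_congr rfl
  intro i hi
  rw [e_invol (mem_range.mp hi)]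

lemma sig_cong_bar {n : ℕ} (hn : 0 < n) {g : Polynomial (ZMod 2)} (hg : g.natDegree < n) :
    Mp n ∣ sig n g - barPoly n g := by
  have hsig : sig n g = ∑ i ∈ range n, C (g.coeff i) * X ^ ((n - 1) * i) := by
    conv_lhs => rw [as_sum_lt hg]
    rw [map_sum]
    exact Finset.sum_congr rfl fun i _ => sig_C_mul_X_pow n _ i
  rw [hsig, bar_eq_sum]
  exact core n hn _

lemma sig_bar_cong_self {n : ℕ} (hn : 0 < n) {g : Polynomial (ZMod 2)} (hg : g.natDegree < n) :
    Mp n ∣ sig n (barPoly n g) - g := by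
  have hsig : sig n (barPoly n g)
      = ∑ i ∈ range n, C (g.coeff (if i = 0 then 0 else n - i)) * X ^ ((n - 1) * i) := by
    unfold barPoly
    rw [map_sum]
    exact Finset.sum_congr rfl fun i _ => sig_C_mul_X_pow n _ i
  have hg' : g = ∑ i ∈ range n,
      C (g.coeff (if i = 0 then 0 else n - i)) * X ^ (if i = 0 then 0 else n - i) := by
    conv_lhs => rw [as_sum_lt hg]
    rw [reindexE n (fun j => C (g.coeff j) * X ^ j)]
  have hsub : sig n (barPoly n g) - g
      = (∑ i ∈ range n, C (g.coeff (if i = 0 then 0 else n - i)) * X ^ ((n - 1) * i))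
        - (∑ i ∈ range n,
            C (g.coeff (if i = 0 then 0 else n - i)) * X ^ (if i = 0 then 0 else n - i)) := by
    linear_combination hsig - hg'
  rw [hsub]
  exact core n hn _

lemma cong_mul {m x x' y y' : Polynomial (ZMod 2)} (h1 : m ∣ x - x') (h2 : m ∣ y - y') :
    m ∣ x * y - x' * y' := by
  have h : x * y - x' * y' = (x - x') * y + x' * (y - y') := by ring
  rw [h]
  exact dvd_add (h1.mul_right _) (h2.mul_left _)

lemma mod_cong_self {n : ℕ} (hn : 0 < n) (p : Polynomial (ZMod 2)) :
    Mp n ∣ p %ₘ Mp n - p := by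
  have hdiv := p.modByMonic_add_div (Mp n)
  have h : p %ₘ Mp n - p = -(Mp n * (p /ₘ Mp n)) := by linear_combination hdiv
  rw [h]
  exact (dvd_mul_right _ _).neg_right

lemma mod_eq_of_dvd {n : ℕ} (hn : 0 < n) {p q : Polynomial (ZMod 2)} (h : Mp n ∣ p - q) :
    p %ₘ Mp n = q %ₘ Mp n := by
  have h0 : (p - q) %ₘ Mp n = 0 := (modByMonic_eq_zero_iff_dvd (hMp hn)).2 h
  rw [sub_modByMonic] at h0
  exact sub_eq_zero.mp h0

lemma rev_key {n : ℕ} (hn : 0 < n) {g h : Polynomial (ZMod 2)} (he : g * h = Mp n) :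
    Mp n ∣ g * sig n h.reverse := by
  set d := h.natDegree with hd
  have step1 : Mp n ∣ X ^ d * sig n h.reverse - h := by
    have hrev : h.reverse = ∑ j ∈ range (d + 1), C (h.coeff (d - j)) * X ^ j := by
      rw [as_sum_lt (lt_of_le_of_lt h.reverse_natDegree_le (Nat.lt_succ_self d))]
      apply Finset.sum_congr rfl
      intro j hj
      have hj' : j ≤ d := Nat.lt_succ_iff.mp (mem_range.mp hj)
      rw [coeff_reverse, revAt_le hj']
    have hsr : X ^ d * sig n h.reverse
        = ∑ j ∈ range (d + 1), C (h.coeff (d - j)) * X ^ (d + (n - 1) * j) := by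
      rw [hrev, map_sum, Finset.mul_sum]
      apply Finset.sum_congr rfl
      intro j _
      rw [sig_C_mul_X_pow, pow_add]
      ring
    have hh : h = ∑ j ∈ range (d + 1), C (h.coeff (d - j)) * X ^ (d - j) := by
      conv_lhs => rw [as_sum_lt (Nat.lt_succ_self d)]
      rw [← Finset.sum_range_reflect]
      apply Finset.sum_congr rfl
      intro j _
      simp
    have hsub : X ^ d * sig n h.reverse - h
        = ∑ j ∈ range (d + 1),
            (C (h.coeff (d - j)) * X ^ (d + (n - 1) * j) - C (h.coeff (d - j)) * X ^ (d - j)) := by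
      rw [Finset.sum_sub_distrib]
      linear_combination hsr - hh
    rw [hsub]
    apply Finset.dvd_sum
    intro j hj
    have hj' : j ≤ d := Nat.lt_succ_iff.mp (mem_range.mp hj)
    have key : (d + (n - 1) * j) % n = (d - j) % n := by
      have e1 : (n - 1) * j + j = n * j := by
        have hh1 : n - 1 + 1 = n := Nat.succ_pred_eq_of_pos hn
        calc (n - 1) * j + j = ((n - 1) + 1) * j := by ring
        _ = n * j := by rw [hh1]
      have e2 : d + (n - 1) * j = n * j + (d - j) := by omega
      rw [e2, Nat.mul_add_mod]
    have hfac : C (h.coeff (d - j)) * X ^ (d + (n - 1) * j) - C (h.coeff (d - j)) * X ^ (d - j)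
        = C (h.coeff (d - j)) * (X ^ (d + (n - 1) * j) - X ^ (d - j)) := by ring
    rw [hfac]
    exact (dvd_X_pow_sub key).mul_left _
  have step2 : Mp n ∣ X ^ d * (g * sig n h.reverse) := by
    have h2 : X ^ d * (g * sig n h.reverse) = g * (X ^ d * sig n h.reverse - h) + Mp n := by
      rw [← he]; ring
    rw [h2]
    exact dvd_add (step1.mul_left g) dvd_rfl
  have hcop : IsCoprime (Mp n) ((X : Polynomial (ZMod 2)) ^ d) := by
    apply IsCoprime.pow_right
    refine ⟨-1, X ^ (n - 1), ?_⟩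
    have hx : (X : Polynomial (ZMod 2)) ^ (n - 1) * X = X ^ n := by
      rw [← pow_succ, Nat.sub_add_cancel hn]
    rw [hx]
    ring
  exact hcop.dvd_of_dvd_mul_left step2

lemma barPoly_coeff_lt {n j : ℕ} (g : Polynomial (ZMod 2)) (hj : j < n) :
    (barPoly n g).coeff j = g.coeff (if j = 0 then 0 else n - j) := by
  unfold barPoly
  rw [finset_sum_coeff]
  rw [Finset.sum_eq_single j]
  · simp
  · intro i _ hij
    simp [coeff_X_pow, hij, Ne.symm hij]
  · intro h
    exact absurd (mem_range.mpr hj) h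

lemma barPoly_coeff_ge {n j : ℕ} (g : Polynomial (ZMod 2)) (hj : n ≤ j) :
    (barPoly n g).coeff j = 0 := by
  unfold barPoly
  rw [finset_sum_coeff]
  apply Finset.sum_eq_zero
  intro i hi
  have hi' : i < n := mem_range.mp hi
  rw [coeff_C_mul, coeff_X_pow, if_neg (by omega : ¬ j = i), mul_zero]

lemma barPoly_natDegree_lt {n : ℕ} (hn : 0 < n) (g : Polynomial (ZMod 2)) :
    (barPoly n g).natDegree < n := by
  by_cases h0 : barPoly n g = 0
  · simpa [h0] using hn
  · by_contra hc
    push_neg at hc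
    exact h0 (leadingCoeff_eq_zero.mp (barPoly_coeff_ge g hc))

lemma coeff_mod_zero {n : ℕ} (hn : 0 < n) {p : Polynomial (ZMod 2)} (hp : p.natDegree < 2 * n) :
    (p %ₘ Mp n).coeff 0 = p.coeff 0 + p.coeff n := by
  have hM := hMp hn
  have hdiv := p.modByMonic_add_div (Mp n)
  have hq : (p /ₘ Mp n).natDegree < n := by
    rw [natDegree_divByMonic p hM, natDegree_Mp]
    omega
  have hMq : Mp n * (p /ₘ Mp n) = (p /ₘ Mp n) * X ^ n - (p /ₘ Mp n) := by
    ring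
  have h0 : p.coeff 0 = (p %ₘ Mp n).coeff 0 + (Mp n * (p /ₘ Mp n)).coeff 0 := by
    conv_lhs => rw [← hdiv]
    rw [coeff_add]
  have hn0 : p.coeff n = (p %ₘ Mp n).coeff n + (Mp n * (p /ₘ Mp n)).coeff n := by
    conv_lhs => rw [← hdiv]
    rw [coeff_add]
  have hr : (p %ₘ Mp n).coeff n = 0 := by
    apply coeff_eq_zero_of_natDegree_lt
    have := natDegree_modByMonic_lt p hM (Mp_ne_one hn)
    rwa [natDegree_Mp] at this
  have hqn : (p /ₘ Mp n).coeff n = 0 := coeff_eq_zero_of_natDegree_lt hq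
  rw [hMq, coeff_sub, coeff_mul_X_pow'] at h0 hn0
  rw [if_neg (by omega : ¬ n ≤ 0)] at h0
  rw [if_pos (le_refl n), Nat.sub_self] at hn0
  rw [hr, hqn] at hn0
  linear_combination - h0 - hn0

lemma E0 {n : ℕ} (hn : 0 < n) {f g : Polynomial (ZMod 2)}
    (hf : f.natDegree < n) (hg : g.natDegree < n) :
    ∑ i : Fin n, f.coeff i * g.coeff i = ((f * barPoly n g) %ₘ Mp n).coeff 0 := by
  have hbar := barPoly_natDegree_lt hn g
  have hdeg : (f * barPoly n g).natDegree < 2 * n := by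
    apply lt_of_le_of_lt (natDegree_mul_le)
    omega
  rw [coeff_mod_zero hn hdeg, mul_coeff_zero, coeff_mul,
    Finset.Nat.sum_antidiagonal_eq_sum_range_succ_mk, Finset.sum_range_succ]
  have hfn : f.coeff n = 0 := coeff_eq_zero_of_natDegree_lt hf
  have hterm : ∀ k ∈ range n, f.coeff k * (barPoly n g).coeff (n - k)
      = if k = 0 then 0 else f.coeff k * g.coeff k := by
    intro k hk
    have hk' : k < n := mem_range.mp hk
    rcases Nat.eq_zero_or_pos k with h0 | h0
    · have hz : (barPoly n g).coeff (n - 0) = 0 := barPoly_coeff_ge g (by omega)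
      subst h0
      simp only [Nat.sub_zero] at hz
      simp [hz]
    · rw [if_neg h0.ne']
      have h1 : n - k < n := by omega
      rw [barPoly_coeff_lt g h1, if_neg (by omega : ¬ n - k = 0)]
      congr 2
      omega
  rw [Finset.sum_congr rfl hterm]
  have hb0 : (barPoly n g).coeff 0 = g.coeff 0 := by
    rw [barPoly_coeff_lt g hn]; simp
  rw [hb0, hfn]
  have split : ∑ i : Fin n, f.coeff ↑i * g.coeff ↑i
      = ∑ k ∈ range n, f.coeff k * g.coeff k :=
    (Finset.sum_range (fun k => f.coeff k * g.coeff k)).symm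
  rw [split]
  have hfin : ∑ k ∈ range n, f.coeff k * g.coeff k
      = f.coeff 0 * g.coeff 0 + ∑ k ∈ range n, (if k = 0 then 0 else f.coeff k * g.coeff k) := by
    have h1 : ∀ k ∈ range n, f.coeff k * g.coeff k
        = (if k = 0 then f.coeff k * g.coeff k else 0)
          + (if k = 0 then 0 else f.coeff k * g.coeff k) := by
      intro k _
      by_cases h : k = 0 <;> simp [h]
    rw [Finset.sum_congr rfl h1, Finset.sum_add_distrib]
    congr 1
    rw [Finset.sum_ite_eq' (range n) 0 (fun k => f.coeff k * g.coeff k)]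
    simp [hn]
  rw [hfin]
  ring

lemma T_eq {n : ℕ} (hn : 0 < n) (p q : Polynomial (ZMod 2)) :
    ∑ i : Fin n, (p %ₘ Mp n).coeff i * (q %ₘ Mp n).coeff i
      = ((p * sig n q) %ₘ Mp n).coeff 0 := by
  have hdp : (p %ₘ Mp n).natDegree < n := by
    have := natDegree_modByMonic_lt p (hMp hn) (Mp_ne_one hn)
    rwa [natDegree_Mp] at this
  have hdq : (q %ₘ Mp n).natDegree < n := by
    have := natDegree_modByMonic_lt q (hMp hn) (Mp_ne_one hn)
    rwa [natDegree_Mp] at this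
  rw [E0 hn hdp hdq]
  congr 1
  apply mod_eq_of_dvd hn
  apply cong_mul (mod_cong_self hn p)
  have h1 : Mp n ∣ barPoly n (q %ₘ Mp n) - sig n (q %ₘ Mp n) := by
    have := (sig_cong_bar hn hdq).neg_right
    simpa using this
  have h2 : Mp n ∣ sig n (q %ₘ Mp n) - sig n q := by
    obtain ⟨t, ht⟩ := mod_cong_self hn q
    have hmap : sig n (q %ₘ Mp n) - sig n q = sig n (Mp n) * sig n t := by
      rw [← map_mul, ← ht, map_sub]
    rw [hmap]
    apply Dvd.dvd.mul_right
    have hs : sig n (Mp n) = X ^ ((n - 1) * n) - X ^ 0 := by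
      simp [sig, coe_eval₂RingHom, ← pow_mul]
    rw [hs]
    apply dvd_X_pow_sub
    rw [Nat.mul_comm, Nat.mul_mod_right]
    simp
  have := h1.add h2
  simpa using this

end Stmt3Aux

/-- every generator-type codeword of `C(g₁,g₂,v)` is symplectically orthogonal
to every vector `([c·g₁^⊥ + d·v̄·g₂^⊥ mod xⁿ−1], [c·v̄·g₁^⊥ + d·g₂^⊥ mod xⁿ−1])`,
where `g₁^⊥ = h₁.reverse = x^{deg h₁}·h₁(1/x)` and likewise for `g₂^⊥`. -/
theorem stmt_3 (n : ℕ) (hn : 0 < n) (g₁ g₂ v h₁ h₂ : Polynomial (ZMod 2))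
    (hdeg₁ : g₁.natDegree < n) (hdeg₂ : g₂.natDegree < n) (hdegv : v.natDegree < n)
    (he₁ : g₁ * h₁ = X ^ n - 1) (he₂ : g₂ * h₂ = X ^ n - 1)
    (a b c d : Polynomial (ZMod 2)) :
    sinner n (cwL n g₁ g₂ v (a, b))
      (vecL n ((c * h₁.reverse + d * (barPoly n v * h₂.reverse)) %ₘ (X ^ n - 1)),
       vecL n ((c * (barPoly n v * h₁.reverse) + d * h₂.reverse) %ₘ (X ^ n - 1))) = 0 := by
  classical
  have hM := Stmt3Aux.hMp hn
  simp only [sinner, cwL, vecL, LinearMap.prod_apply, Function.prod, LinearMap.coe_comp,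
    Function.comp_apply, Function.comp, LinearMap.add_apply, LinearMap.coe_mk, AddHom.coe_mk,
    LinearMap.fst_apply, LinearMap.snd_apply, LinearMap.mulRight_apply,
    Polynomial.modByMonicHom, LinearMap.pi_apply, lcoeff_apply]
  rw [Finset.sum_sub_distrib, Stmt3Aux.T_eq hn, Stmt3Aux.T_eq hn, ← coeff_sub, ← sub_modByMonic]
  have F1 : Stmt3Aux.Mp n ∣ g₁ * Stmt3Aux.sig n h₁.reverse := Stmt3Aux.rev_key hn he₁
  have F2 : Stmt3Aux.Mp n ∣ g₂ * Stmt3Aux.sig n h₂.reverse := Stmt3Aux.rev_key hn he₂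
  have F3 : Stmt3Aux.Mp n ∣ Stmt3Aux.sig n (barPoly n v) - v := Stmt3Aux.sig_bar_cong_self hn hdegv
  have key : Stmt3Aux.Mp n ∣
      (a * (v * g₁) + b * g₂) * Stmt3Aux.sig n (c * (barPoly n v * h₁.reverse) + d * h₂.reverse)
      - (a * g₁ + b * (v * g₂)) * Stmt3Aux.sig n (c * h₁.reverse + d * (barPoly n v * h₂.reverse)) := by
    simp only [map_add, map_mul]
    have hdec :
        (a * (v * g₁) + b * g₂) *
            (Stmt3Aux.sig n c * (Stmt3Aux.sig n (barPoly n v) * Stmt3Aux.sig n h₁.reverse)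
              + Stmt3Aux.sig n d * Stmt3Aux.sig n h₂.reverse)
          - (a * g₁ + b * (v * g₂)) *
            (Stmt3Aux.sig n c * Stmt3Aux.sig n h₁.reverse
              + Stmt3Aux.sig n d * (Stmt3Aux.sig n (barPoly n v) * Stmt3Aux.sig n h₂.reverse))
        = (a * Stmt3Aux.sig n c * (v * Stmt3Aux.sig n (barPoly n v) - 1))
              * (g₁ * Stmt3Aux.sig n h₁.reverse)
          + (b * Stmt3Aux.sig n d * (1 - v * Stmt3Aux.sig n (barPoly n v)))
              * (g₂ * Stmt3Aux.sig n h₂.reverse)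
          + (b * Stmt3Aux.sig n c * (g₂ * Stmt3Aux.sig n h₁.reverse)
              - a * Stmt3Aux.sig n d * (g₁ * Stmt3Aux.sig n h₂.reverse))
              * (Stmt3Aux.sig n (barPoly n v) - v) := by ring
    rw [hdec]
    exact dvd_add (dvd_add (F1.mul_left _) (F2.mul_left _)) (F3.mul_left _)
  rw [(Polynomial.modByMonic_eq_zero_iff_dvd hM).2 key]
  simp
end

section
/- Let n be a positive integer and let v ∈ F₂[x] have degree less than n. If gcd(v − 1, xⁿ−1) = 1 in F₂[x], then gcd(v̄ − 1, xⁿ−1) = 1, where v̄ denotes the polynomial v₀ + v_{n−1}x + v_{n−2}x² + ⋯ + v₁x^{n−1} obtained from v = v₀+v₁x+⋯+v_{n−1}x^{n−1}. -/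
open Polynomial

lemma bar_eq (n : ℕ) (v : Polynomial (ZMod 2)) :
    barPoly n v = ∑ k ∈ Finset.range n, C (v.coeff k) * X ^ (if k = 0 then 0 else n - k) := by
  rw [barPoly]
  refine Finset.sum_nbij' (i := fun k => if k = 0 then 0 else n - k)
    (j := fun k => if k = 0 then 0 else n - k) ?_ ?_ ?_ ?_ ?_
  all_goals intro a ha
  all_goals simp only [Finset.mem_range] at *
  · split <;> omega
  · split <;> omega
  · rcases Nat.eq_zero_or_pos a with h|h
    · simp [h]
    · rw [if_neg h.ne']
      have : n - a ≠ 0 := by omega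
      rw [if_neg this]; omega
  · rcases Nat.eq_zero_or_pos a with h|h
    · simp [h]
    · rw [if_neg h.ne']
      have : n - a ≠ 0 := by omega
      rw [if_neg this]; omega
  · rcases Nat.eq_zero_or_pos a with h|h
    · simp [h]
    · rw [if_neg h.ne']
      have h2 : n - a ≠ 0 := by omega
      rw [if_neg h2]
      have : n - (n - a) = a := by omega
      rw [this]

lemma dvd_aux (n k : ℕ) (hk : k < n) :
    (X^n - 1 : Polynomial (ZMod 2)) ∣ X^(k*(n-1)) - X^(if k = 0 then 0 else n - k) := by
  rcases Nat.eq_zero_or_pos k with h0 | h0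
  · simp [h0]
  · rw [if_neg h0.ne']
    have hexp : k*(n-1) = (n-k) + (k-1)*n := by
      cases' k with j; · omega
      cases' n with m; · omega
      simp only [Nat.succ_sub_one, Nat.succ_mul, Nat.mul_succ]
      have : j < m := by omega
      omega
    have heq : (X:Polynomial (ZMod 2))^(k*(n-1)) - X^(n-k)
        = X^(n-k) * (X^((k-1)*n) - 1) := by
      rw [hexp, pow_add]; ring
    rw [heq]
    have h2 : (X^n - 1 : Polynomial (ZMod 2)) ∣ X^((k-1)*n) - 1 := by
      have := sub_dvd_pow_sub_pow (X^n : Polynomial (ZMod 2)) 1 (k-1)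
      simpa [← pow_mul, mul_comm] using this
    exact Dvd.dvd.mul_left h2 _

lemma bar_aux (n : ℕ) (v : Polynomial (ZMod 2)) (hdegv : v.natDegree < n) :
    (X^n - 1 : Polynomial (ZMod 2)) ∣
      Polynomial.aeval (X^(n-1) : Polynomial (ZMod 2)) v - barPoly n v := by
  nth_rewrite 1 [Polynomial.as_sum_range' v n hdegv]
  rw [map_sum, bar_eq, ← Finset.sum_sub_distrib]
  refine Finset.dvd_sum fun k hk => ?_
  rw [Polynomial.aeval_monomial, ← pow_mul, mul_comm (n-1) k, Polynomial.algebraMap_eq,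
    ← mul_sub]
  exact Dvd.dvd.mul_left (dvd_aux n k (Finset.mem_range.mp hk)) _

/-- if `gcd(v − 1, xⁿ−1) = 1` then `gcd(v̄ − 1, xⁿ−1) = 1`. -/
theorem stmt_4 (n : ℕ) (hn : 0 < n) (v : Polynomial (ZMod 2)) (hdegv : v.natDegree < n)
    (hvcop : IsCoprime (v - 1) (X ^ n - 1)) :
    IsCoprime (barPoly n v - 1) (X ^ n - 1) := by
  obtain ⟨a, b, hab⟩ := hvcop
  set σ : Polynomial (ZMod 2) →ₐ[ZMod 2] Polynomial (ZMod 2) :=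
    Polynomial.aeval (X^(n-1) : Polynomial (ZMod 2)) with hσ
  obtain ⟨e, he⟩ := bar_aux n v hdegv
  obtain ⟨d, hd⟩ : (X^n - 1 : Polynomial (ZMod 2)) ∣ σ (X^n - 1) := by
    have h1 : σ (X^n - 1) = X^((n-1)*n) - 1 := by
      simp [hσ, ← pow_mul]
    rw [h1, mul_comm]
    have := sub_dvd_pow_sub_pow (X^n : Polynomial (ZMod 2)) 1 (n-1)
    simpa [← pow_mul] using this
  simp only [map_sub, map_one] at hd
  refine ⟨σ a, σ a * e + σ b * d, ?_⟩
  have h1 := congrArg σ hab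
  simp only [map_add, map_mul, map_sub, map_one] at h1
  change Polynomial.aeval _ v - barPoly n v = _ at he
  linear_combination h1 - σ a * he - σ b * hd
end

section
/- Let n be a positive integer, let g₁, g₂, v ∈ F₂[x] have degree less than n with g₁·h₁ = xⁿ−1 and g₂·h₂ = xⁿ−1 for some h₁, h₂ ∈ F₂[x], gcd(g₁, g₂) = 1 and gcd(v−1, xⁿ−1) = 1, and set g₁^⊥ = x^{deg h₁}·h₁(1/x), g₂^⊥ = x^{deg h₂}·h₂(1/x). Then the symplectic dual of the two-generator quasi-cyclic code C(g₁,g₂,v) equals the F₂-linear code { ([c·g₁^⊥ + d·v̄·g₂^⊥ mod xⁿ−1], [c·v̄·g₁^⊥ + d·g₂^⊥ mod xⁿ−1]) : c, d ∈ F₂[x] }, where v̄ denotes the polynomial v₀ + v_{n−1}x + v_{n−2}x² + ⋯ + v₁x^{n−1}. -/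
open Polynomial

namespace QCAux

variable {n : ℕ}

lemma Mmonic (hn : 0 < n) : (X ^ n - 1 : (ZMod 2)[X]).Monic := by
  simpa using monic_X_pow_sub_C (1 : ZMod 2) hn.ne'

lemma Mdeg (hn : 0 < n) : (X ^ n - 1 : (ZMod 2)[X]).degree = n := by
  simpa using degree_X_pow_sub_C hn (1 : ZMod 2)

lemma Mne (hn : 0 < n) : (X ^ n - 1 : (ZMod 2)[X]) ≠ 0 := (Mmonic hn).ne_zero

lemma coeff_mod_high (hn : 0 < n) (f : (ZMod 2)[X]) {i : ℕ} (hi : n ≤ i) :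
    (f %ₘ (X ^ n - 1)).coeff i = 0 := by
  apply coeff_eq_zero_of_degree_lt
  exact lt_of_lt_of_le ((degree_modByMonic_lt f (Mmonic hn)).trans_eq (Mdeg hn))
    (by exact_mod_cast hi)

lemma natDegree_lt_of_degree_lt (hn : 0 < n) {p : (ZMod 2)[X]} (h : p.degree < (n : ℕ)) :
    p.natDegree < n := by
  by_cases hp : p = 0
  · simpa [hp]
  · exact (natDegree_lt_iff_degree_lt hp).mpr h

lemma natDegree_mod_lt (hn : 0 < n) (f : (ZMod 2)[X]) :
    (f %ₘ (X ^ n - 1)).natDegree < n :=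
  natDegree_lt_of_degree_lt hn ((degree_modByMonic_lt f (Mmonic hn)).trans_eq (Mdeg hn))

lemma mul_mod_left (hn : 0 < n) (a f : (ZMod 2)[X]) :
    (a * f) %ₘ (X ^ n - 1) = (a * (f %ₘ (X ^ n - 1))) %ₘ (X ^ n - 1) := by
  apply modByMonic_eq_of_dvd_sub (Mmonic hn)
  have h := modByMonic_add_div f (X ^ n - 1)
  exact ⟨a * (f /ₘ (X ^ n - 1)), by linear_combination (a : (ZMod 2)[X]) * h.symm⟩

lemma coeff_zero_mod (hn : 0 < n) {P : (ZMod 2)[X]} (hP : P.natDegree < 2 * n) :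
    (P %ₘ (X ^ n - 1)).coeff 0 = P.coeff 0 + P.coeff n := by
  set Q := P /ₘ (X ^ n - 1) with hQ
  have hdiv := modByMonic_add_div P (X ^ n - 1)
  rw [← hQ] at hdiv
  have hMnat : (X ^ n - 1 : (ZMod 2)[X]).natDegree = n :=
    natDegree_eq_of_degree_eq_some (Mdeg hn)
  have hQdeg : Q.natDegree < n := by
    rw [hQ, natDegree_divByMonic P (Mmonic hn), hMnat]; omega
  have hQn : Q.coeff n = 0 := coeff_eq_zero_of_natDegree_lt hQdeg
  have hMQ : ∀ k, ((X ^ n - 1 : (ZMod 2)[X]) * Q).coeff k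
      = (if n ≤ k then Q.coeff (k - n) else 0) - Q.coeff k := by
    intro k; rw [sub_mul, one_mul, coeff_sub, coeff_X_pow_mul']
  have h0 := congrArg (fun p : (ZMod 2)[X] => p.coeff 0) hdiv
  have hn' := congrArg (fun p : (ZMod 2)[X] => p.coeff n) hdiv
  simp only [coeff_add, hMQ, if_neg (by omega : ¬ n ≤ 0), if_pos (le_refl n),
    Nat.sub_self, hQn, coeff_mod_high hn P (le_refl n), sub_zero, zero_add] at h0 hn'
  -- h0 : (P %ₘ M).coeff 0 + (0 - Q.coeff 0) = P.coeff 0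
  -- hn' : Q.coeff 0 = P.coeff n
  have : (P %ₘ (X ^ n - 1)).coeff 0 = P.coeff 0 + Q.coeff 0 := by linear_combination h0
  rw [this, hn']




lemma rangeSum_coeff (N : ℕ) (c : ℕ → ZMod 2) (j : ℕ) :
    (∑ i ∈ Finset.range N, C (c i) * X ^ i).coeff j = if j < N then c j else 0 := by
  rw [finset_sum_coeff]
  simp only [coeff_C_mul, coeff_X_pow]
  by_cases hj : j < N
  · rw [if_pos hj, Finset.sum_eq_single j]
    · simp
    · intro b _ hb; simp [Ne.symm hb]
    · intro h; exact absurd (Finset.mem_range.mpr hj) h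
  · rw [if_neg hj, Finset.sum_eq_zero]
    intro b hb
    have : ¬ j = b := by rw [Finset.mem_range] at hb; omega
    simp [this]

lemma rangeSum_degree_lt (hn : 0 < n) (c : ℕ → ZMod 2) :
    (∑ i ∈ Finset.range n, C (c i) * X ^ i).degree < (n : WithBot ℕ) := by
  rw [degree_lt_iff_coeff_zero]
  intro m hm
  rw [rangeSum_coeff]
  have : ¬ m < n := by exact_mod_cast not_lt.mpr hm
  simp [this]

lemma barPoly_coeff (f : (ZMod 2)[X]) (j : ℕ) :
    (barPoly n f).coeff j = if j < n then f.coeff (if j = 0 then 0 else n - j) else 0 :=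
  rangeSum_coeff n _ j

noncomputable def toPoly (n : ℕ) (w : Fin n → ZMod 2) : (ZMod 2)[X] :=
  ∑ i ∈ Finset.range n, C (if h : i < n then w ⟨i, h⟩ else 0) * X ^ i

lemma toPoly_coeff (w : Fin n → ZMod 2) (j : ℕ) :
    (toPoly n w).coeff j = if h : j < n then w ⟨j, h⟩ else 0 := by
  rw [toPoly, rangeSum_coeff]
  by_cases h : j < n <;> simp [h]

lemma toPoly_coeff' (w : Fin n → ZMod 2) (i : Fin n) :
    (toPoly n w).coeff (i : ℕ) = w i := by
  rw [toPoly_coeff, dif_pos i.isLt]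

lemma toPoly_natDegree_lt (hn : 0 < n) (w : Fin n → ZMod 2) :
    (toPoly n w).natDegree < n :=
  natDegree_lt_of_degree_lt hn (rangeSum_degree_lt hn _)

lemma toPoly_mod (hn : 0 < n) (w : Fin n → ZMod 2) :
    toPoly n w %ₘ (X ^ n - 1) = toPoly n w := by
  rw [modByMonic_eq_self_iff (Mmonic hn), Mdeg hn]
  exact rangeSum_degree_lt hn _

lemma barPoly_natDegree_lt (hn : 0 < n) (f : (ZMod 2)[X]) :
    (barPoly n f).natDegree < n :=
  natDegree_lt_of_degree_lt hn (rangeSum_degree_lt hn _)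

lemma pairing (hn : 0 < n) (f g : (ZMod 2)[X]) (hg : g.natDegree < n) :
    ∑ i : Fin n, (f %ₘ (X ^ n - 1)).coeff i * g.coeff i
      = ((f * barPoly n g) %ₘ (X ^ n - 1)).coeff 0 := by
  set f' := f %ₘ (X ^ n - 1) with hf'
  have h1 : (f * barPoly n g) %ₘ (X ^ n - 1) = (f' * barPoly n g) %ₘ (X ^ n - 1) := by
    rw [mul_comm f, mul_comm f', hf', mul_mod_left hn]
  have hdeg : (f' * barPoly n g).natDegree < 2 * n := by
    calc (f' * barPoly n g).natDegree ≤ f'.natDegree + (barPoly n g).natDegree :=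
          natDegree_mul_le
      _ < 2 * n := by
          have := natDegree_mod_lt hn f
          have := barPoly_natDegree_lt hn g
          rw [hf']; omega
  rw [h1, coeff_zero_mod hn hdeg]
  have hc0 : (f' * barPoly n g).coeff 0 = f'.coeff 0 * g.coeff 0 := by
    rw [mul_coeff_zero, barPoly_coeff, if_pos hn, if_pos rfl]
  have hcn : (f' * barPoly n g).coeff n
      = ∑ i ∈ Finset.range (n + 1), f'.coeff i * (barPoly n g).coeff (n - i) := by
    rw [coeff_mul, Finset.Nat.sum_antidiagonal_eq_sum_range_succ_mk]
  have hterm : ∀ i ∈ Finset.range (n + 1),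
      f'.coeff i * (barPoly n g).coeff (n - i)
        = if i = 0 then 0 else f'.coeff i * g.coeff i := by
    intro i hi
    rw [Finset.mem_range] at hi
    rcases Nat.eq_zero_or_pos i with rfl | hipos
    · rw [if_pos rfl, barPoly_coeff, Nat.sub_zero, if_neg (lt_irrefl n), mul_zero]
    · rw [if_neg (by omega)]
      rcases eq_or_lt_of_le (Nat.le_of_lt_succ hi) with rfl | hilt
      · have h0 : f'.coeff i = 0 := coeff_mod_high hn f (le_refl _)
        rw [h0, zero_mul, zero_mul]
      · rw [barPoly_coeff, if_pos (by omega : n - i < n), if_neg (by omega : ¬ n - i = 0),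
          (by omega : n - (n - i) = i)]
  rw [hcn, Finset.sum_congr rfl hterm, hc0]
  rw [Finset.sum_range_succ, if_neg (by omega : ¬ n = 0)]
  have hfn : f'.coeff n = 0 := coeff_mod_high hn f (le_refl _)
  rw [hfn, zero_mul, add_zero]
  have key : ∀ i ∈ Finset.range n,
      (if i = 0 then 0 else f'.coeff i * g.coeff i)
        + (if i = 0 then f'.coeff i * g.coeff i else 0) = f'.coeff i * g.coeff i := by
    intro i _; split <;> simp
  have hsplit : ∑ i ∈ Finset.range n, f'.coeff i * g.coeff i
      = (∑ i ∈ Finset.range n, if i = 0 then 0 else f'.coeff i * g.coeff i)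
        + (∑ i ∈ Finset.range n, if i = 0 then f'.coeff i * g.coeff i else 0) := by
    rw [← Finset.sum_add_distrib]
    exact (Finset.sum_congr rfl key).symm
  have hone : (∑ i ∈ Finset.range n, if i = 0 then f'.coeff i * g.coeff i else 0)
      = f'.coeff 0 * g.coeff 0 := by
    rw [Finset.sum_ite_eq' (Finset.range n) 0 (fun i => f'.coeff i * g.coeff i),
      if_pos (Finset.mem_range.mpr hn)]
  rw [Fin.sum_univ_eq_sum_range (fun i => f'.coeff i * g.coeff i), hsplit, hone]
  ring

lemma shift_iff (hn : 0 < n) (F : (ZMod 2)[X]) :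
    (∀ a, ((a * F) %ₘ (X ^ n - 1)).coeff 0 = 0) ↔ F %ₘ (X ^ n - 1) = 0 := by
  constructor
  · intro h
    set F' := F %ₘ (X ^ n - 1) with hF'
    ext k
    rw [coeff_zero]
    by_cases hk : k < n
    · have hkey := h (X ^ (n - k))
      rw [mul_mod_left hn, ← hF'] at hkey
      have hdeg : (X ^ (n - k) * F').natDegree < 2 * n := by
        calc (X ^ (n - k) * F').natDegree ≤ (X ^ (n - k) : (ZMod 2)[X]).natDegree + F'.natDegree :=
              natDegree_mul_le
          _ < 2 * n := by
              rw [natDegree_X_pow]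
              have := natDegree_mod_lt hn F
              rw [← hF'] at this; omega
      rw [coeff_zero_mod hn hdeg, coeff_X_pow_mul', coeff_X_pow_mul',
        if_neg (by omega : ¬ n - k ≤ 0), if_pos (by omega : n - k ≤ n),
        (by omega : n - (n - k) = k), zero_add] at hkey
      exact hkey
    · exact coeff_mod_high hn F (by omega)
  · intro h a
    rw [mul_mod_left hn, h, mul_zero, zero_modByMonic, coeff_zero]

end QCAux

namespace QCAux

variable {n : ℕ}

noncomputable def piQ (n : ℕ) :
    (ZMod 2)[X] →+* (ZMod 2)[X] ⧸ Ideal.span {(X ^ n - 1 : (ZMod 2)[X])} :=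
  Ideal.Quotient.mk _

lemma piQ_surjective (n : ℕ) : Function.Surjective (piQ n) :=
  Ideal.Quotient.mk_surjective

lemma piQ_M (n : ℕ) : piQ n (X ^ n - 1) = 0 :=
  Ideal.Quotient.eq_zero_iff_mem.mpr (Ideal.subset_span (Set.mem_singleton _))

lemma xn_one (n : ℕ) : (piQ n X) ^ n = 1 := by
  have h := piQ_M n
  rw [map_sub, map_pow, map_one, sub_eq_zero] at h
  exact h

lemma pow_reduce (n a : ℕ) : (piQ n X) ^ a = (piQ n X) ^ (a % n) := by
  conv_lhs => rw [← Nat.div_add_mod a n]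
  rw [pow_add, pow_mul, xn_one, one_pow, one_mul]

noncomputable def sigma (n : ℕ) :
    ((ZMod 2)[X] ⧸ Ideal.span {(X ^ n - 1 : (ZMod 2)[X])}) →+*
      ((ZMod 2)[X] ⧸ Ideal.span {(X ^ n - 1 : (ZMod 2)[X])}) :=
  Ideal.Quotient.lift _ ((aeval (R := ZMod 2) ((piQ n X) ^ (n - 1))).toRingHom) (by
    intro a ha
    rw [Ideal.mem_span_singleton] at ha
    obtain ⟨b, rfl⟩ := ha
    rw [map_mul]
    have h0 : (aeval (R := ZMod 2) ((piQ n X) ^ (n - 1))).toRingHom (X ^ n - 1) = 0 := by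
      simp only [AlgHom.toRingHom_eq_coe, RingHom.coe_coe, map_sub, map_pow, map_one, aeval_X]
      rw [← pow_mul, Nat.mul_comm (n - 1) n, pow_mul, xn_one, one_pow, sub_self]
    rw [h0, zero_mul])

lemma sigma_mk (n : ℕ) (f : (ZMod 2)[X]) :
    sigma n (piQ n f) = aeval (R := ZMod 2) ((piQ n X) ^ (n - 1)) f :=
  Ideal.Quotient.lift_mk _ _ _

lemma sigma_X (n : ℕ) : sigma n (piQ n X) = (piQ n X) ^ (n - 1) := by
  rw [sigma_mk, aeval_X]

lemma sigma_C (n : ℕ) (c : ZMod 2) : sigma n (piQ n (C c)) = piQ n (C c) := by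
  have hc : ∀ c : ZMod 2, c = 0 ∨ c = 1 := by decide
  rcases hc c with rfl | rfl
  · simp only [map_zero, C_0]
  · simp only [C_1, map_one]

lemma modsq (n : ℕ) (hn : 0 < n) (k : ℕ) : ((n - 1) * (n - 1) * k) % n = k % n := by
  obtain ⟨m, rfl⟩ : ∃ m, n = m + 1 := ⟨n - 1, (Nat.succ_pred_eq_of_pos hn).symm⟩
  simp only [Nat.add_sub_cancel]
  rcases Nat.eq_zero_or_pos m with rfl | hm
  · simp [Nat.mod_one]
  · obtain ⟨j, rfl⟩ : ∃ j, m = j + 1 := ⟨m - 1, (Nat.succ_pred_eq_of_pos hm).symm⟩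
    have h : (j + 1) * (j + 1) * k = k + (j * k) * (j + 1 + 1) := by ring
    rw [h, Nat.add_mul_mod_self_right]

lemma sigma_sigma (hn : 0 < n) (z : (ZMod 2)[X] ⧸ Ideal.span {(X ^ n - 1 : (ZMod 2)[X])}) :
    sigma n (sigma n z) = z := by
  obtain ⟨f, rfl⟩ := piQ_surjective n z
  induction f using Polynomial.induction_on' with
  | add p q hp hq => rw [map_add, map_add, map_add, hp, hq]
  | monomial k c =>
    simp only [← C_mul_X_pow_eq_monomial, map_mul, map_pow, sigma_C, sigma_X, ← pow_mul]
    congr 1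
    rw [pow_reduce n ((n-1)*((n-1)*k)), show (n-1)*((n-1)*k) = (n-1)*(n-1)*k from by ring, modsq n hn k, ← pow_reduce]

lemma reflect_sum {ι : Type*} (s : Finset ι) (d : ℕ) (p : ι → (ZMod 2)[X]) :
    reflect d (∑ i ∈ s, p i) = ∑ i ∈ s, reflect d (p i) := by
  classical
  induction s using Finset.cons_induction with
  | empty => ext j; simp [coeff_reflect]
  | cons a s ha ih => rw [Finset.sum_cons, Finset.sum_cons, reflect_add, ih]

lemma pi_reflect (hn : 0 < n) {f : (ZMod 2)[X]} {d : ℕ} (hd : f.natDegree ≤ d) :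
    piQ n (f.reflect d) = (piQ n X) ^ d * sigma n (piQ n f) := by
  have hdecomp : f = ∑ i ∈ Finset.range (d + 1), C (f.coeff i) * X ^ i := by
    ext j
    rw [rangeSum_coeff]
    by_cases h : j < d + 1
    · rw [if_pos h]
    · rw [if_neg h]
      exact coeff_eq_zero_of_natDegree_lt (by omega)
  conv_lhs => rw [hdecomp]
  conv_rhs => rw [hdecomp]
  rw [reflect_sum, map_sum, map_sum, map_sum, Finset.mul_sum]
  apply Finset.sum_congr rfl
  intro i hi
  rw [Finset.mem_range] at hi
  have h1 : piQ n (reflect d (C (f.coeff i) * X ^ i))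
      = piQ n (C (f.coeff i)) * (piQ n X) ^ (d - i) := by
    rw [reflect_C_mul_X_pow, revAt_le (by omega : i ≤ d), map_mul, map_pow]
  have h2 : sigma n (piQ n (C (f.coeff i) * X ^ i))
      = piQ n (C (f.coeff i)) * ((piQ n X) ^ (n - 1)) ^ i := by
    rw [map_mul, map_mul, sigma_C, map_pow, map_pow, sigma_X]
  rw [h1, h2]
  have hpow : (piQ n X) ^ d * ((piQ n X) ^ (n - 1)) ^ i = (piQ n X) ^ (d - i) := by
    rw [← pow_mul, ← pow_add, pow_reduce n (d + (n - 1) * i), pow_reduce n (d - i)]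
    congr 1
    have harith : d + (n - 1) * i = (d - i) + i * n := by
      cases n with
      | zero => exact absurd hn (lt_irrefl 0)
      | succ m =>
        simp only [Nat.add_sub_cancel]
        rw [Nat.mul_succ, Nat.mul_comm i m]
        have hid : i ≤ d := by omega
        generalize m * i = t
        omega
    rw [harith, Nat.add_mul_mod_self_right]
  rw [← hpow]; ring

lemma pi_reverse (hn : 0 < n) (f : (ZMod 2)[X]) :
    piQ n f.reverse = (piQ n X) ^ f.natDegree * sigma n (piQ n f) :=
  pi_reflect hn le_rfl

lemma pi_barPoly (hn : 0 < n) {f : (ZMod 2)[X]} (hf : f.natDegree < n) :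
    piQ n (barPoly n f) = sigma n (piQ n f) := by
  have key : barPoly n f = reflect n f - C (f.coeff 0) * (X ^ n - 1) := by
    ext j
    rw [barPoly_coeff, coeff_sub, coeff_reflect, coeff_C_mul, coeff_sub, coeff_X_pow, coeff_one]
    rcases Nat.lt_trichotomy j n with hj | hj | hj
    · rw [if_pos hj]
      rcases Nat.eq_zero_or_pos j with rfl | hjpos
      · rw [if_pos rfl, revAt_le (by omega : 0 ≤ n), Nat.sub_zero,
          coeff_eq_zero_of_natDegree_lt hf, if_neg (by omega : ¬ (0:ℕ) = n), if_pos rfl]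
        ring
      · rw [if_neg (by omega : ¬ j = 0), revAt_le (by omega : j ≤ n),
          if_neg (by omega : ¬ j = n), if_neg (by omega : ¬ j = 0)]
        ring
    · rw [hj, if_neg (lt_irrefl n), revAt_le (le_refl n), Nat.sub_self, if_pos rfl,
        if_neg (by omega : ¬ n = 0)]
      ring
    · rw [if_neg (by omega : ¬ j < n), revAt_eq_self_of_lt hj,
        coeff_eq_zero_of_natDegree_lt (by omega), if_neg (by omega : ¬ j = n),
        if_neg (by omega : ¬ j = 0)]
      ring
  rw [key, map_sub, map_mul, piQ_M, mul_zero, sub_zero, pi_reflect hn (le_of_lt hf),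
    xn_one, one_mul]

lemma pi_eq_iff (hn : 0 < n) (f g : (ZMod 2)[X]) :
    piQ n f = piQ n g ↔ f %ₘ (X ^ n - 1) = g %ₘ (X ^ n - 1) := by
  rw [piQ, Ideal.Quotient.mk_eq_mk_iff_sub_mem, Ideal.mem_span_singleton,
    ← modByMonic_eq_zero_iff_dvd (Mmonic hn), sub_modByMonic, sub_eq_zero]

lemma pi_eq_zero_iff (hn : 0 < n) (f : (ZMod 2)[X]) :
    piQ n f = 0 ↔ f %ₘ (X ^ n - 1) = 0 := by
  have := pi_eq_iff hn f 0
  rwa [map_zero, zero_modByMonic] at this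

lemma ann (hn : 0 < n) {g h : (ZMod 2)[X]} (hgh : g * h = X ^ n - 1)
    (z : (ZMod 2)[X] ⧸ Ideal.span {(X ^ n - 1 : (ZMod 2)[X])})
    (hz : piQ n g * z = 0) : ∃ s, z = piQ n h * s := by
  obtain ⟨Z, rfl⟩ := piQ_surjective n z
  rw [← map_mul, pi_eq_zero_iff hn, modByMonic_eq_zero_iff_dvd (Mmonic hn)] at hz
  obtain ⟨q, hq⟩ := hz
  have hg0 : g ≠ 0 := by
    intro h0
    rw [h0, zero_mul] at hgh
    exact Mne hn hgh.symm
  have hZ : Z = h * q := by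
    apply mul_left_cancel₀ hg0
    rw [← mul_assoc, hgh, ← hq]
  exact ⟨piQ n q, by rw [hZ, map_mul]⟩

lemma htwoQ (n : ℕ) (z : (ZMod 2)[X] ⧸ Ideal.span {(X ^ n - 1 : (ZMod 2)[X])}) :
    z + z = 0 := by
  have hp : (1 + 1 : (ZMod 2)[X]) = 0 := by
    rw [← C_1, ← C_add, show (1 + 1 : ZMod 2) = 0 from by decide, C_0]
  calc z + z = (1 + 1) * z := by ring
    _ = piQ n (1 + 1) * z := by rw [map_add, map_one]
    _ = 0 := by rw [hp, map_zero, zero_mul]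

end QCAux


namespace QCAux

variable {n : ℕ}

lemma vecL_apply (n : ℕ) (f : (ZMod 2)[X]) (i : Fin n) : vecL n f i = f.coeff i := rfl

lemma vec_eq_iff (hn : 0 < n) (f : (ZMod 2)[X]) (u : Fin n → ZMod 2) :
    vecL n (f %ₘ (X ^ n - 1)) = u ↔ f %ₘ (X ^ n - 1) = toPoly n u := by
  constructor
  · intro h
    ext j
    rw [toPoly_coeff]
    by_cases hj : j < n
    · rw [dif_pos hj, ← congrFun h ⟨j, hj⟩, vecL_apply]
    · rw [dif_neg hj]
      exact coeff_mod_high hn f (by omega)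
  · intro h
    funext i
    rw [vecL_apply, h, toPoly_coeff' u i]

lemma core {Q : Type*} [CommRing Q] (σ : Q →+* Q) (hσσ : ∀ z, σ (σ z) = z)
    (htwo : ∀ z : Q, z + z = 0)
    (x xi g₁ g₂ h₁ h₂ v W₁ W₂ : Q) (d₁ d₂ : ℕ)
    (hx : x * xi = 1)
    (hg₁ : g₁ * h₁ = 0) (hg₂ : g₂ * h₂ = 0)
    (hann₁ : ∀ z, g₁ * z = 0 → ∃ s, z = h₁ * s)
    (hann₂ : ∀ z, g₂ * z = 0 → ∃ t, z = h₂ * t)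
    (e : Q) (he : e * (1 + v * v) = 1) :
    (g₁ * (v * σ W₂ + σ W₁) = 0 ∧ g₂ * (σ W₂ + v * σ W₁) = 0) ↔
    (∃ c d : Q, W₁ = c * (x ^ d₁ * σ h₁) + d * (σ v * (x ^ d₂ * σ h₂)) ∧
                W₂ = c * (σ v * (x ^ d₁ * σ h₁)) + d * (x ^ d₂ * σ h₂)) := by
  have hxd : ∀ k : ℕ, x ^ k * xi ^ k = 1 := fun k => by rw [← mul_pow, hx, one_pow]
  constructor
  · rintro ⟨hc₁, hc₂⟩
    obtain ⟨s, hs⟩ := hann₁ _ hc₁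
    obtain ⟨t, ht⟩ := hann₂ _ hc₂
    have hA : σ W₁ = (e * s) * h₁ + (e * v * t) * h₂ := by
      linear_combination e * hs + (e * v) * ht + (- σ W₁) * he + htwo (-(e * v * σ W₂))
    have hB : σ W₂ = (e * v * s) * h₁ + (e * t) * h₂ := by
      linear_combination (e * v) * hs + e * ht + (- σ W₂) * he + htwo (-(e * v * σ W₁))
    refine ⟨σ (e * s) * xi ^ d₁, σ (e * t) * xi ^ d₂, ?_, ?_⟩
    · have h1 : W₁ = σ (σ W₁) := (hσσ W₁).symm
      rw [h1, hA]
      simp only [map_add, map_mul]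
      linear_combination (-(σ e * σ s * σ h₁)) * (hxd d₁) + (-(σ e * σ v * σ t * σ h₂)) * (hxd d₂)
    · have h2 : W₂ = σ (σ W₂) := (hσσ W₂).symm
      rw [h2, hB]
      simp only [map_add, map_mul]
      linear_combination (-(σ e * σ v * σ s * σ h₁)) * (hxd d₁) + (-(σ e * σ t * σ h₂)) * (hxd d₂)
  · rintro ⟨c, d, hW₁, hW₂⟩
    have hσ₁ : σ W₁ = σ c * (σ x) ^ d₁ * h₁ + σ d * v * ((σ x) ^ d₂ * h₂) := by
      rw [hW₁]; simp only [map_add, map_mul, map_pow, hσσ]; ring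
    have hσ₂ : σ W₂ = σ c * v * ((σ x) ^ d₁ * h₁) + σ d * ((σ x) ^ d₂ * h₂) := by
      rw [hW₂]; simp only [map_add, map_mul, map_pow, hσσ]; ring
    constructor
    · rw [hσ₁, hσ₂]
      linear_combination (σ c * (σ x) ^ d₁ * (1 + v * v)) * hg₁
        + htwo (g₁ * (σ d * v * ((σ x) ^ d₂ * h₂)))
    · rw [hσ₁, hσ₂]
      linear_combination (σ d * (σ x) ^ d₂ * (1 + v * v)) * hg₂
        + htwo (g₂ * (σ c * v * ((σ x) ^ d₁ * h₁)))

end QCAux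


open QCAux in
/-- the symplectic dual of `C(g₁,g₂,v)` equals
`{ ([c·g₁^⊥ + d·v̄·g₂^⊥ mod xⁿ−1], [c·v̄·g₁^⊥ + d·g₂^⊥ mod xⁿ−1]) : c, d ∈ F₂[x] }`,
where `g₁^⊥ = h₁.reverse` and `g₂^⊥ = h₂.reverse`. -/
theorem stmt_5 (n : ℕ) (hn : 0 < n) (g₁ g₂ v h₁ h₂ : Polynomial (ZMod 2))
    (hdeg₁ : g₁.natDegree < n) (hdeg₂ : g₂.natDegree < n) (hdegv : v.natDegree < n)
    (he₁ : g₁ * h₁ = X ^ n - 1) (he₂ : g₂ * h₂ = X ^ n - 1)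
    (hcop : IsCoprime g₁ g₂) (hvcop : IsCoprime (v - 1) (X ^ n - 1)) :
    sympDual n (QCCode n g₁ g₂ v) =
      LinearMap.range (dualCwL n h₁.reverse h₂.reverse (barPoly n v)) := by
  classical
  ext w
  set W₁ := toPoly n w.1 with hW₁def
  set W₂ := toPoly n w.2 with hW₂def
  set F₁ : (ZMod 2)[X] := (v * g₁) * barPoly n W₂ + g₁ * barPoly n W₁ with hF₁def
  set F₂ : (ZMod 2)[X] := g₂ * barPoly n W₂ + (v * g₂) * barPoly n W₁ with hF₂def
  -- sinner computation
  have hsub : ∀ a b : ZMod 2, a - b = a + b := by decide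
  have hsin : ∀ a b : (ZMod 2)[X],
      sinner n (cwL n g₁ g₂ v (a, b)) w = ((a * F₁ + b * F₂) %ₘ (X ^ n - 1)).coeff 0 := by
    intro a b
    have hc : cwL n g₁ g₂ v (a, b)
        = (vecL n ((a * (v * g₁) + b * g₂) %ₘ (X ^ n - 1)),
           vecL n ((a * g₁ + b * (v * g₂)) %ₘ (X ^ n - 1))) := rfl
    rw [hc]
    unfold sinner
    simp only [vecL_apply]
    have hterm : ∀ i : Fin n,
        ((a * (v * g₁) + b * g₂) %ₘ (X ^ n - 1)).coeff i * w.2 i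
          - ((a * g₁ + b * (v * g₂)) %ₘ (X ^ n - 1)).coeff i * w.1 i
        = ((a * (v * g₁) + b * g₂) %ₘ (X ^ n - 1)).coeff i * W₂.coeff i
          + ((a * g₁ + b * (v * g₂)) %ₘ (X ^ n - 1)).coeff i * W₁.coeff i := by
      intro i
      rw [hsub, hW₁def, hW₂def, toPoly_coeff', toPoly_coeff']
    rw [Finset.sum_congr rfl (fun i _ => hterm i), Finset.sum_add_distrib,
      pairing hn _ W₂ (toPoly_natDegree_lt hn w.2),
      pairing hn _ W₁ (toPoly_natDegree_lt hn w.1),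
      ← coeff_add, ← add_modByMonic]
    congr 1
    apply congrArg (fun p => p %ₘ (X ^ n - 1))
    rw [hF₁def, hF₂def]; ring
  -- membership in the symplectic dual
  have hL0 : w ∈ sympDual n (QCCode n g₁ g₂ v)
      ↔ ∀ a b : (ZMod 2)[X], sinner n (cwL n g₁ g₂ v (a, b)) w = 0 := by
    constructor
    · intro h a b
      exact h _ ⟨(a, b), rfl⟩
    · intro h u hu
      obtain ⟨⟨a, b⟩, rfl⟩ := hu
      exact h a b
  have hL : w ∈ sympDual n (QCCode n g₁ g₂ v)
      ↔ (F₁ %ₘ (X ^ n - 1) = 0 ∧ F₂ %ₘ (X ^ n - 1) = 0) := by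
    rw [hL0]
    constructor
    · intro h
      constructor
      · rw [← shift_iff hn]
        intro a
        have := h a 0
        rw [hsin] at this
        simpa using this
      · rw [← shift_iff hn]
        intro b
        have := h 0 b
        rw [hsin] at this
        simpa using this
    · rintro ⟨hh1, hh2⟩ a b
      rw [hsin, add_modByMonic, mul_mod_left hn a F₁, mul_mod_left hn b F₂, hh1, hh2,
        mul_zero, mul_zero, zero_modByMonic, add_zero, coeff_zero]
  -- membership in the claimed dual code
  have hR : w ∈ LinearMap.range (dualCwL n h₁.reverse h₂.reverse (barPoly n v))
      ↔ ∃ c d : (ZMod 2)[X],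
          (c * h₁.reverse + d * (barPoly n v * h₂.reverse)) %ₘ (X ^ n - 1) = W₁ ∧
          (c * (barPoly n v * h₁.reverse) + d * h₂.reverse) %ₘ (X ^ n - 1) = W₂ := by
    constructor
    · rintro ⟨⟨c, d⟩, rfl⟩
      refine ⟨c, d, ?_, ?_⟩
      · rw [← vec_eq_iff hn]; rfl
      · rw [← vec_eq_iff hn]; rfl
    · rintro ⟨c, d, h1, h2⟩
      refine ⟨(c, d), ?_⟩
      have e1 : vecL n ((c * h₁.reverse + d * (barPoly n v * h₂.reverse)) %ₘ (X ^ n - 1)) = w.1 := by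
        rw [vec_eq_iff hn, h1]
      have e2 : vecL n ((c * (barPoly n v * h₁.reverse) + d * h₂.reverse) %ₘ (X ^ n - 1)) = w.2 := by
        rw [vec_eq_iff hn, h2]
      have : dualCwL n h₁.reverse h₂.reverse (barPoly n v) (c, d)
          = (vecL n ((c * h₁.reverse + d * (barPoly n v * h₂.reverse)) %ₘ (X ^ n - 1)),
             vecL n ((c * (barPoly n v * h₁.reverse) + d * h₂.reverse) %ₘ (X ^ n - 1))) := rfl
      rw [this, e1, e2]
  rw [hL, hR]
  -- translate to the quotient ring
  have hWmod₁ : W₁ %ₘ (X ^ n - 1) = W₁ := toPoly_mod hn w.1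
  have hWmod₂ : W₂ %ₘ (X ^ n - 1) = W₂ := toPoly_mod hn w.2
  have hπF₁ : piQ n F₁ = piQ n g₁ *
      (piQ n v * sigma n (piQ n W₂) + sigma n (piQ n W₁)) := by
    rw [hF₁def, map_add, map_mul, map_mul, map_mul,
      pi_barPoly hn (toPoly_natDegree_lt hn w.2), pi_barPoly hn (toPoly_natDegree_lt hn w.1)]
    ring
  have hπF₂ : piQ n F₂ = piQ n g₂ *
      (sigma n (piQ n W₂) + piQ n v * sigma n (piQ n W₁)) := by
    rw [hF₂def, map_add, map_mul, map_mul, map_mul,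
      pi_barPoly hn (toPoly_natDegree_lt hn w.2), pi_barPoly hn (toPoly_natDegree_lt hn w.1)]
    ring
  -- unit e
  obtain ⟨p, q, hpq⟩ := hvcop
  have hunit : piQ n p * (piQ n v - 1) = 1 := by
    have h := congrArg (piQ n) hpq
    rw [map_add, map_mul, map_mul, map_one, map_sub, map_one, piQ_M, mul_zero, add_zero] at h
    exact h
  have he : (piQ n p * piQ n p) * (1 + piQ n v * piQ n v) = 1 := by
    linear_combination (piQ n p * (piQ n v - 1) + 1) * hunit
      + htwoQ n (piQ n p * piQ n p * piQ n v)
  -- annihilator facts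
  have hg₁Q : piQ n g₁ * piQ n h₁ = 0 := by rw [← map_mul, he₁, piQ_M]
  have hg₂Q : piQ n g₂ * piQ n h₂ = 0 := by rw [← map_mul, he₂, piQ_M]
  have hxinv : piQ n X * (piQ n X) ^ (n - 1) = 1 := by
    rw [← pow_succ']
    rw [show n - 1 + 1 = n by omega, xn_one]
  have hcore := core (sigma n) (sigma_sigma hn) (htwoQ n)
    (piQ n X) ((piQ n X) ^ (n - 1)) (piQ n g₁) (piQ n g₂) (piQ n h₁) (piQ n h₂)
    (piQ n v) (piQ n W₁) (piQ n W₂) h₁.natDegree h₂.natDegree hxinv hg₁Q hg₂Q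
    (ann hn he₁) (ann hn he₂) (piQ n p * piQ n p) he
  constructor
  · rintro ⟨hh1, hh2⟩
    have hc1 : piQ n g₁ * (piQ n v * sigma n (piQ n W₂) + sigma n (piQ n W₁)) = 0 := by
      rw [← hπF₁, pi_eq_zero_iff hn, hh1]
    have hc2 : piQ n g₂ * (sigma n (piQ n W₂) + piQ n v * sigma n (piQ n W₁)) = 0 := by
      rw [← hπF₂, pi_eq_zero_iff hn, hh2]
    obtain ⟨c', d', hcd₁, hcd₂⟩ := hcore.mp ⟨hc1, hc2⟩
    obtain ⟨c, rfl⟩ := piQ_surjective n c'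
    obtain ⟨d, rfl⟩ := piQ_surjective n d'
    refine ⟨c, d, ?_, ?_⟩
    · rw [← hWmod₁, ← pi_eq_iff hn, map_add, map_mul, map_mul, map_mul,
        pi_reverse hn h₁, pi_reverse hn h₂, pi_barPoly hn hdegv, ← hcd₁]
    · rw [← hWmod₂, ← pi_eq_iff hn, map_add, map_mul, map_mul, map_mul,
        pi_reverse hn h₁, pi_reverse hn h₂, pi_barPoly hn hdegv, ← hcd₂]
  · rintro ⟨c, d, h1, h2⟩
    have hq1 : piQ n W₁ = piQ n c * ((piQ n X) ^ h₁.natDegree * sigma n (piQ n h₁))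
        + piQ n d * (sigma n (piQ n v) * ((piQ n X) ^ h₂.natDegree * sigma n (piQ n h₂))) := by
      rw [← pi_reverse hn h₁, ← pi_reverse hn h₂, ← pi_barPoly hn hdegv, ← map_mul, ← map_mul,
        ← map_mul, ← map_add, pi_eq_iff hn, hWmod₁, h1]
    have hq2 : piQ n W₂ = piQ n c * (sigma n (piQ n v) * ((piQ n X) ^ h₁.natDegree * sigma n (piQ n h₁)))
        + piQ n d * ((piQ n X) ^ h₂.natDegree * sigma n (piQ n h₂)) := by
      rw [← pi_reverse hn h₁, ← pi_reverse hn h₂, ← pi_barPoly hn hdegv, ← map_mul, ← map_mul,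
        ← map_mul, ← map_add, pi_eq_iff hn, hWmod₂, h2]
    obtain ⟨hc1, hc2⟩ := hcore.mpr ⟨piQ n c, piQ n d, hq1, hq2⟩
    constructor
    · rw [← pi_eq_zero_iff hn, hπF₁, hc1]
    · rw [← pi_eq_zero_iff hn, hπF₂, hc2]
end

section
/- Let n be a positive integer, let g₁, g₂, v ∈ F₂[x] have degree less than n with g₁·h₁ = xⁿ−1 and g₂·h₂ = xⁿ−1 for some h₁, h₂ ∈ F₂[x], gcd(g₁, g₂) = 1 and gcd(v−1, xⁿ−1) = 1, and set g₁^⊥ = x^{deg h₁}·h₁(1/x), g₂^⊥ = x^{deg h₂}·h₂(1/x). Then the F₂-linear code { ([c·g₁^⊥ + d·v̄·g₂^⊥ mod xⁿ−1], [c·v̄·g₁^⊥ + d·g₂^⊥ mod xⁿ−1]) : c, d ∈ F₂[x] } ⊆ F₂^{2n} has F₂-dimension deg(g₁) + deg(g₂), where v̄ denotes the polynomial v₀ + v_{n−1}x + v_{n−2}x² + ⋯ + v₁x^{n−1}. -/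
open Polynomial

-- auxiliary lemmas to insert before stmt_6

lemma my_vecL_eq_zero {n : ℕ} {q : Polynomial (ZMod 2)} (hq : q.degree < (n : ℕ))
    (h : vecL n q = 0) : q = 0 := by
  ext i
  rcases lt_or_ge i n with hi | hi
  · have := congrFun h ⟨i, hi⟩
    simpa [vecL] using this
  · simp [Polynomial.coeff_eq_zero_of_degree_lt
      (hq.trans_le (by exact_mod_cast hi))]

lemma my_mod_congr {p a b : Polynomial (ZMod 2)} (hp : p.Monic) (h : p ∣ a - b) :
    a %ₘ p = b %ₘ p := by
  have h0 : (a - b) %ₘ p = 0 := (Polynomial.modByMonic_eq_zero_iff_dvd hp).2 h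
  rw [Polynomial.sub_modByMonic] at h0
  exact sub_eq_zero.mp h0

lemma dualCwL_apply (n : ℕ) (G₁ G₂ V : Polynomial (ZMod 2)) (c d : Polynomial (ZMod 2)) :
    dualCwL n G₁ G₂ V (c, d) =
      (vecL n ((c * G₁ + d * (V * G₂)) %ₘ (X ^ n - 1)),
       vecL n ((c * (V * G₁) + d * G₂) %ₘ (X ^ n - 1))) := rfl

lemma my_key_unit (n : ℕ) (hn : 0 < n) (v : Polynomial (ZMod 2)) (hdegv : v.natDegree < n)
    (hvcop : IsCoprime (v - 1) ((X : Polynomial (ZMod 2)) ^ n - 1)) :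
    IsUnit (Ideal.Quotient.mk (Ideal.span {(X : Polynomial (ZMod 2)) ^ n - 1})
      (barPoly n v - 1)) := by
  set I : Ideal (Polynomial (ZMod 2)) := Ideal.span {(X : Polynomial (ZMod 2)) ^ n - 1} with hI
  set π := Ideal.Quotient.mk I with hπ
  have h0 : π ((X : Polynomial (ZMod 2)) ^ n - 1) = 0 := by
    rw [hπ, hI, Ideal.Quotient.eq_zero_iff_dvd]
  have hXn : (π X) ^ n = 1 := by
    have := h0
    rw [map_sub, map_pow, map_one, sub_eq_zero] at this
    exact this
  set t := (π X) ^ (n - 1) with ht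
  have htn : t ^ n = 1 := by
    rw [ht, ← pow_mul, mul_comm, pow_mul, hXn, one_pow]
  have hσp : Polynomial.aeval t ((X : Polynomial (ZMod 2)) ^ n - 1) = 0 := by
    rw [map_sub, map_pow, Polynomial.aeval_X, map_one, htn, sub_self]
  have hσv : Polynomial.aeval t v = π (barPoly n v) := by
    rw [Polynomial.aeval_eq_sum_range' hdegv, barPoly, map_sum]
    refine Finset.sum_nbij' (fun j => if j = 0 then 0 else n - j)
      (fun j => if j = 0 then 0 else n - j) ?_ ?_ ?_ ?_ ?_
    · intro j hj
      simp only [Finset.mem_range] at hj ⊢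
      split <;> omega
    · intro j hj
      simp only [Finset.mem_range] at hj ⊢
      split <;> omega
    · intro j hj
      simp only [Finset.mem_range] at hj
      rcases Nat.eq_zero_or_pos j with rfl | hjpos
      · simp
      · have hj0 : j ≠ 0 := hjpos.ne'
        have h1 : n - j ≠ 0 := by omega
        simp only [if_neg hj0, if_neg h1]
        omega
    · intro j hj
      simp only [Finset.mem_range] at hj
      rcases Nat.eq_zero_or_pos j with rfl | hjpos
      · simp
      · have hj0 : j ≠ 0 := hjpos.ne'
        have h1 : n - j ≠ 0 := by omega
        simp only [if_neg hj0, if_neg h1]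
        omega
    · intro j hj
      simp only [Finset.mem_range] at hj
      have hcoeff : (if (if j = 0 then 0 else n - j) = 0 then 0 else n - (if j = 0 then 0 else n - j)) = j := by
        rcases Nat.eq_zero_or_pos j with rfl | hjpos
        · simp
        · have hj0 : j ≠ 0 := hjpos.ne'
          have h1 : n - j ≠ 0 := by omega
          simp only [if_neg hj0, if_neg h1]
          omega
      rw [map_mul, map_pow, hcoeff]
      have hCA : π (Polynomial.C (v.coeff j)) = algebraMap (ZMod 2) _ (v.coeff j) := rfl
      rw [hCA, ← Algebra.smul_def]
      congr 1
      rcases Nat.eq_zero_or_pos j with rfl | hjpos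
      · simp
    
      · have : (n - 1) * j = n * (j - 1) + (n - j) := by
          zify [show 1 ≤ n by omega, show j ≤ n by omega, hjpos]
          ring
        rw [ht, ← pow_mul, this, pow_add, pow_mul, hXn, one_pow, one_mul]
        simp [hjpos.ne']
  obtain ⟨a, b, hab⟩ := hvcop
  have := congrArg (Polynomial.aeval t) hab
  rw [map_add, map_mul, map_mul, hσp, mul_zero, add_zero, map_one, map_sub, map_one, hσv] at this
  exact IsUnit.of_mul_eq_one ((Polynomial.aeval t) a) (by rw [map_sub, map_one]; linear_combination this)


/-- the code
`{ ([c·g₁^⊥ + d·v̄·g₂^⊥ mod xⁿ−1], [c·v̄·g₁^⊥ + d·g₂^⊥ mod xⁿ−1]) : c, d ∈ F₂[x] }`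
has `F₂`-dimension `deg g₁ + deg g₂`, where `g₁^⊥ = h₁.reverse`, `g₂^⊥ = h₂.reverse`. -/
theorem stmt_6 (n : ℕ) (hn : 0 < n) (g₁ g₂ v h₁ h₂ : Polynomial (ZMod 2))
    (hdeg₁ : g₁.natDegree < n) (hdeg₂ : g₂.natDegree < n) (hdegv : v.natDegree < n)
    (he₁ : g₁ * h₁ = X ^ n - 1) (he₂ : g₂ * h₂ = X ^ n - 1)
    (hcop : IsCoprime g₁ g₂) (hvcop : IsCoprime (v - 1) (X ^ n - 1)) :
    Module.finrank (ZMod 2)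
        ↥(LinearMap.range (dualCwL n h₁.reverse h₂.reverse (barPoly n v))) =
      g₁.natDegree + g₂.natDegree := by
  classical
  set V := barPoly n v with hV
  have hpm : ((X : Polynomial (ZMod 2)) ^ n - 1).Monic := by
    simpa using Polynomial.monic_X_pow_sub_C (1 : ZMod 2) hn.ne'
  have hpdeg : ((X : Polynomial (ZMod 2)) ^ n - 1).degree = n := by
    simpa using Polynomial.degree_X_pow_sub_C hn (1 : ZMod 2)
  have hpnatdeg : ((X : Polynomial (ZMod 2)) ^ n - 1).natDegree = n :=
    Polynomial.natDegree_eq_of_degree_eq_some hpdeg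
  have hpne : ((X : Polynomial (ZMod 2)) ^ n - 1) ≠ 0 := hpm.ne_zero
  have hneg : (-1 : Polynomial (ZMod 2)) = 1 := by
    rw [← Polynomial.C_1, ← Polynomial.C_neg]
    congr 1
  have hpadd : ((X : Polynomial (ZMod 2)) ^ n - 1) = X ^ n + 1 := by
    rw [sub_eq_add_neg, hneg]
  have hrev : ((X : Polynomial (ZMod 2)) ^ n - 1).reverse = X ^ n - 1 := by
    rw [Polynomial.reverse, hpnatdeg]
    conv_lhs => rw [hpadd]
    rw [show ((X : Polynomial (ZMod 2)) ^ n + 1) = X ^ n + X ^ 0 by rw [pow_zero],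
      Polynomial.reflect_add, Polynomial.reflect_monomial, Polynomial.reflect_monomial,
      Polynomial.revAt_le (le_refl n), Polynomial.revAt_le (Nat.zero_le n)]
    rw [Nat.sub_self, Nat.sub_zero, pow_zero, hpadd]
    ring
  have hK₁ : g₁.reverse * h₁.reverse = X ^ n - 1 := by
    rw [← Polynomial.reverse_mul_of_domain, he₁, hrev]
  have hK₂ : g₂.reverse * h₂.reverse = X ^ n - 1 := by
    rw [← Polynomial.reverse_mul_of_domain, he₂, hrev]
  have hp00 : ((X : Polynomial (ZMod 2)) ^ n - 1).coeff 0 = 1 := by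
    simp only [Polynomial.coeff_sub, Polynomial.coeff_X_pow, Polynomial.coeff_one,
      if_neg (by omega : ¬ (0 = n)), if_pos rfl]
    decide
  have hc01 : g₁.coeff 0 * h₁.coeff 0 = 1 := by
    rw [← Polynomial.mul_coeff_zero, he₁, hp00]
  have hc02 : g₂.coeff 0 * h₂.coeff 0 = 1 := by
    rw [← Polynomial.mul_coeff_zero, he₂, hp00]
  have hg₁0 : g₁.coeff 0 ≠ 0 := left_ne_zero_of_mul_eq_one hc01
  have hg₂0 : g₂.coeff 0 ≠ 0 := left_ne_zero_of_mul_eq_one hc02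
  have hzmod : ∀ a : ZMod 2, a ≠ 0 → a = 1 := by decide
  have hmonic : ∀ g : Polynomial (ZMod 2), g.coeff 0 ≠ 0 → g.reverse.Monic := by
    intro g hg
    have hg0 : g ≠ 0 := fun h => hg (by simp [h])
    have htd : g.natTrailingDegree = 0 :=
      Polynomial.natTrailingDegree_eq_zero.2 (Or.inr hg)
    have : g.trailingCoeff = g.coeff 0 := by
      rw [Polynomial.trailingCoeff, htd]
    rw [Polynomial.Monic, Polynomial.reverse_leadingCoeff, this]
    exact hzmod _ hg
  have hK₁m : g₁.reverse.Monic := hmonic g₁ hg₁0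
  have hK₂m : g₂.reverse.Monic := hmonic g₂ hg₂0
  have hrevdeg : ∀ g : Polynomial (ZMod 2), g.coeff 0 ≠ 0 →
      g.reverse.natDegree = g.natDegree := by
    intro g hg
    rw [Polynomial.reverse_natDegree, Polynomial.natTrailingDegree_eq_zero.2 (Or.inr hg),
      Nat.sub_zero]
  have hK₁deg : g₁.reverse.natDegree = g₁.natDegree := hrevdeg g₁ hg₁0
  have hK₂deg : g₂.reverse.natDegree = g₂.natDegree := hrevdeg g₂ hg₂0
  have hK₁ne : g₁.reverse ≠ 0 := hK₁m.ne_zero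
  have hK₂ne : g₂.reverse ≠ 0 := hK₂m.ne_zero
  have hG₁ne : h₁.reverse ≠ 0 := fun h => hpne (by rw [← hK₁, h, mul_zero])
  have hG₂ne : h₂.reverse ≠ 0 := fun h => hpne (by rw [← hK₂, h, mul_zero])
  have hG₁deg : h₁.reverse.natDegree = n - g₁.natDegree := by
    have := congrArg Polynomial.natDegree hK₁
    rw [Polynomial.natDegree_mul hK₁ne hG₁ne, hpnatdeg, hK₁deg] at this
    omega
  have hG₂deg : h₂.reverse.natDegree = n - g₂.natDegree := by
    have := congrArg Polynomial.natDegree hK₂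
    rw [Polynomial.natDegree_mul hK₂ne hG₂ne, hpnatdeg, hK₂deg] at this
    omega
  -- small-degree multiples of the divisors vanish
  have smallcase : ∀ (a G : Polynomial (ZMod 2)) (k : ℕ), G ≠ 0 → G.natDegree = n - k →
      k < n → a.degree < (k : WithBot ℕ) → ((X : Polynomial (ZMod 2)) ^ n - 1) ∣ a * G →
      a = 0 := by
    intro a G k hGne hGdeg hk ha hdvd
    by_contra hane
    have h := Polynomial.natDegree_le_of_dvd hdvd (mul_ne_zero hane hGne)
    rw [Polynomial.natDegree_mul hane hGne, hpnatdeg] at h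
    have := (Polynomial.natDegree_lt_iff_degree_lt hane).2 ha
    omega
  set E₁ := Polynomial.degreeLT (ZMod 2) g₁.natDegree with hE₁
  set E₂ := Polynomial.degreeLT (ZMod 2) g₂.natDegree with hE₂
  set ℓ := (dualCwL n h₁.reverse h₂.reverse V).comp
    ((E₁.subtype).prodMap (E₂.subtype)) with hℓ
  have hℓapp : ∀ (x : ↥E₁ × ↥E₂), ℓ x = dualCwL n h₁.reverse h₂.reverse V
      ((x.1 : Polynomial (ZMod 2)), (x.2 : Polynomial (ZMod 2))) := fun x => rfl
  -- injectivity
  have hinj : Function.Injective ℓ := by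
    rw [← LinearMap.ker_eq_bot, LinearMap.ker_eq_bot']
    rintro ⟨⟨c, hc⟩, ⟨d, hd⟩⟩ h0
    rw [hℓapp, dualCwL_apply] at h0
    have h01 := congrArg Prod.fst h0
    have h02 := congrArg Prod.snd h0
    simp only at h01 h02
    have h1 : ((X : Polynomial (ZMod 2)) ^ n - 1) ∣ c * h₁.reverse + d * (V * h₂.reverse) := by
      rw [← Polynomial.modByMonic_eq_zero_iff_dvd hpm]
      exact my_vecL_eq_zero (by
        have := Polynomial.degree_modByMonic_lt (c * h₁.reverse + d * (V * h₂.reverse)) hpm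
        rwa [hpdeg] at this) h01
    have h2 : ((X : Polynomial (ZMod 2)) ^ n - 1) ∣ c * (V * h₁.reverse) + d * h₂.reverse := by
      rw [← Polynomial.modByMonic_eq_zero_iff_dvd hpm]
      exact my_vecL_eq_zero (by
        have := Polynomial.degree_modByMonic_lt (c * (V * h₁.reverse) + d * h₂.reverse) hpm
        rwa [hpdeg] at this) h02
    have h2p : (2 : Polynomial (ZMod 2)) = 0 := by
      linear_combination (-1 : Polynomial (ZMod 2)) * hneg
    have h3 : ((X : Polynomial (ZMod 2)) ^ n - 1) ∣ d * (V - 1) ^ 2 * h₂.reverse := by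
      have e : d * (V - 1) ^ 2 * h₂.reverse =
          V * (c * h₁.reverse + d * (V * h₂.reverse)) -
            (c * (V * h₁.reverse) + d * h₂.reverse) +
            2 * (d * (1 - V) * h₂.reverse) := by ring
      rw [e, h2p, zero_mul, add_zero]
      exact dvd_sub (h1.mul_left V) h2
    have hU := my_key_unit n hn v hdegv hvcop
    have h4 : Ideal.Quotient.mk (Ideal.span {(X : Polynomial (ZMod 2)) ^ n - 1})
        (d * h₂.reverse) = 0 := by
      have h5 : Ideal.Quotient.mk (Ideal.span {(X : Polynomial (ZMod 2)) ^ n - 1})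
          (d * (V - 1) ^ 2 * h₂.reverse) = 0 := (Ideal.Quotient.eq_zero_iff_dvd _ _).2 h3
      have h6 : Ideal.Quotient.mk (Ideal.span {(X : Polynomial (ZMod 2)) ^ n - 1})
          (d * (V - 1) ^ 2 * h₂.reverse) =
          (Ideal.Quotient.mk (Ideal.span {(X : Polynomial (ZMod 2)) ^ n - 1}) (V - 1)) ^ 2 *
          Ideal.Quotient.mk (Ideal.span {(X : Polynomial (ZMod 2)) ^ n - 1})
            (d * h₂.reverse) := by
        rw [← map_pow, ← map_mul]
        congr 1
        ring
      rw [h6] at h5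
      exact ((hU.pow 2).mul_right_eq_zero).mp h5
    have h7 : ((X : Polynomial (ZMod 2)) ^ n - 1) ∣ d * h₂.reverse :=
      (Ideal.Quotient.eq_zero_iff_dvd _ _).1 h4
    have hd0 : d = 0 := smallcase d h₂.reverse g₂.natDegree hG₂ne hG₂deg hdeg₂
      (Polynomial.mem_degreeLT.1 hd) h7
    have h1' : ((X : Polynomial (ZMod 2)) ^ n - 1) ∣ c * h₁.reverse := by
      rw [hd0, zero_mul, add_zero] at h1
      exact h1
    have hc0 : c = 0 := smallcase c h₁.reverse g₁.natDegree hG₁ne hG₁deg hdeg₁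
      (Polynomial.mem_degreeLT.1 hc) h1'
    refine Prod.ext (Subtype.ext hc0) (Subtype.ext hd0)
  -- range equality
  have hrange : LinearMap.range ℓ =
      LinearMap.range (dualCwL n h₁.reverse h₂.reverse V) := by
    apply le_antisymm (LinearMap.range_comp_le_range _ _)
    rintro y ⟨⟨c, d⟩, rfl⟩
    have hmem₁ : c %ₘ g₁.reverse ∈ E₁ := by
      rw [hE₁, Polynomial.mem_degreeLT]
      have := Polynomial.degree_modByMonic_lt c hK₁m
      rwa [Polynomial.degree_eq_natDegree hK₁ne, hK₁deg] at this
    have hmem₂ : d %ₘ g₂.reverse ∈ E₂ := by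
      rw [hE₂, Polynomial.mem_degreeLT]
      have := Polynomial.degree_modByMonic_lt d hK₂m
      rwa [Polynomial.degree_eq_natDegree hK₂ne, hK₂deg] at this
    refine ⟨(⟨c %ₘ g₁.reverse, hmem₁⟩, ⟨d %ₘ g₂.reverse, hmem₂⟩), ?_⟩
    rw [hℓapp, dualCwL_apply, dualCwL_apply]
    have e₁ : c %ₘ g₁.reverse = c - g₁.reverse * (c /ₘ g₁.reverse) := by
      have := Polynomial.modByMonic_add_div c g₁.reverse
      linear_combination this
    have e₂ : d %ₘ g₂.reverse = d - g₂.reverse * (d /ₘ g₂.reverse) := by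
      have := Polynomial.modByMonic_add_div d g₂.reverse
      linear_combination this
    have key₁ : ((c %ₘ g₁.reverse) * h₁.reverse + (d %ₘ g₂.reverse) * (V * h₂.reverse))
        %ₘ ((X : Polynomial (ZMod 2)) ^ n - 1) =
        (c * h₁.reverse + d * (V * h₂.reverse)) %ₘ ((X : Polynomial (ZMod 2)) ^ n - 1) := by
      apply my_mod_congr hpm
      refine ⟨-(c /ₘ g₁.reverse) - V * (d /ₘ g₂.reverse), ?_⟩
      rw [e₁, e₂]
      linear_combination (-(c /ₘ g₁.reverse)) * hK₁ + (-(V * (d /ₘ g₂.reverse))) * hK₂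
    have key₂ : ((c %ₘ g₁.reverse) * (V * h₁.reverse) + (d %ₘ g₂.reverse) * h₂.reverse)
        %ₘ ((X : Polynomial (ZMod 2)) ^ n - 1) =
        (c * (V * h₁.reverse) + d * h₂.reverse) %ₘ ((X : Polynomial (ZMod 2)) ^ n - 1) := by
      apply my_mod_congr hpm
      refine ⟨-(V * (c /ₘ g₁.reverse)) - (d /ₘ g₂.reverse), ?_⟩
      rw [e₁, e₂]
      linear_combination (-(V * (c /ₘ g₁.reverse))) * hK₁ + (-(d /ₘ g₂.reverse)) * hK₂
    rw [key₁, key₂]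
  -- dimension count
  haveI : Module.Finite (ZMod 2) ↥E₁ :=
    Module.Finite.equiv (Polynomial.degreeLTEquiv (ZMod 2) g₁.natDegree).symm
  haveI : Module.Finite (ZMod 2) ↥E₂ :=
    Module.Finite.equiv (Polynomial.degreeLTEquiv (ZMod 2) g₂.natDegree).symm
  rw [← hrange, LinearMap.finrank_range_of_inj hinj, Module.finrank_prod,
    (Polynomial.degreeLTEquiv (ZMod 2) g₁.natDegree).finrank_eq,
    (Polynomial.degreeLTEquiv (ZMod 2) g₂.natDegree).finrank_eq]
  simp [Module.finrank_pi]
end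

section
/- Let n be a positive integer, let g₁, g₂, v ∈ F₂[x] have degree less than n with g₁·h₁ = xⁿ−1 and g₂·h₂ = xⁿ−1 for some h₁, h₂ ∈ F₂[x], gcd(g₁, g₂) = 1 and gcd(v−1, xⁿ−1) = 1, and set g₁^⊥ = x^{deg h₁}·h₁(1/x). If g₂ divides g₁^⊥ in F₂[x] and v̄ = v (where v̄ denotes the polynomial v₀ + v_{n−1}x + v_{n−2}x² + ⋯ + v₁x^{n−1}), then the two-generator quasi-cyclic code C(g₁,g₂,v) is symplectic dual-containing, i.e., C(g₁,g₂,v)^⊥ₛ ⊆ C(g₁,g₂,v). -/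
open Polynomial

/- ===================== auxiliary development ===================== -/

open Finset

namespace Stmt7Aux

abbrev F := ZMod 2
abbrev P := Polynomial (ZMod 2)

lemma two_eq_zero : (2 : P) = 0 := by
  have : ((2:ℕ) : P) = 0 := by
    rw [← Polynomial.C_eq_natCast, show ((2:ℕ):F) = 0 by decide, map_zero]
  simpa using this

lemma neg_eq' (f : P) : -f = f := by
  rw [neg_eq_iff_add_eq_zero, show f + f = 2 * f by ring, two_eq_zero, zero_mul]

lemma reflect_sum {N : ℕ} {s : Finset ℕ} (f : ℕ → P) :
    Polynomial.reflect N (∑ i ∈ s, f i) = ∑ i ∈ s, Polynomial.reflect N (f i) := by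
  classical
  induction s using Finset.induction_on with
  | empty => simp
  | insert _ _ h ih => rw [Finset.sum_insert h, Finset.sum_insert h, reflect_add, ih]

lemma rev_rev {f : P} (h0 : f.coeff 0 ≠ 0) : f.reverse.reverse = f := by
  have hre : f.reverse.natDegree = f.natDegree := by
    rw [Polynomial.reverse_natDegree]
    have : f.natTrailingDegree = 0 :=
      Polynomial.natTrailingDegree_eq_zero.mpr (Or.inr h0)
    omega
  rw [Polynomial.reverse, hre, Polynomial.reverse]
  ext i
  rw [Polynomial.coeff_reflect, Polynomial.coeff_reflect, Polynomial.revAt_invol]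

section
variable {n : ℕ} (hn : 0 < n)

set_option linter.unusedSectionVars false

include hn in
lemma pmonic : ((X:P)^n - 1).Monic := by
  have : n ≠ 0 := by omega
  simpa using Polynomial.monic_X_pow_sub_C (1 : F) this

lemma pdeg : ((X:P)^n - 1).natDegree = n := by
  simpa using Polynomial.natDegree_X_pow_sub_C (n := n) (r := (1:F))

include hn in
lemma pdegree : ((X:P)^n - 1).degree = n := by
  simpa using Polynomial.degree_X_pow_sub_C hn (1:F)

include hn in
lemma pne : ((X:P)^n - 1) ≠ 0 := (pmonic hn).ne_zero

include hn in
lemma mod_eq_of_dvd_sub {f f' : P} (h : ((X:P)^n - 1) ∣ f - f') :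
    f %ₘ ((X:P)^n - 1) = f' %ₘ ((X:P)^n - 1) := by
  obtain ⟨q, hq⟩ := h
  have : f = f' + ((X:P)^n - 1) * q := by linear_combination hq
  rw [this, Polynomial.add_modByMonic,
    (Polynomial.modByMonic_eq_zero_iff_dvd (pmonic hn)).2 ⟨q, rfl⟩, add_zero]

include hn in
lemma mod_degree_lt (f : P) : ((f %ₘ ((X:P)^n - 1)).degree) < (n : WithBot ℕ) := by
  rw [← pdegree hn]
  exact Polynomial.degree_modByMonic_lt f (pmonic hn)

include hn in
lemma mod_coeff_ge {f : P} {k : ℕ} (hk : n ≤ k) : (f %ₘ ((X:P)^n - 1)).coeff k = 0 := by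
  apply Polynomial.coeff_eq_zero_of_degree_lt
  exact lt_of_lt_of_le (mod_degree_lt hn f) (by exact_mod_cast hk)

include hn in
lemma shift_mod (f : P) :
    (X * f) %ₘ ((X:P)^n - 1)
      = X * (f %ₘ ((X:P)^n - 1))
        - Polynomial.C ((f %ₘ ((X:P)^n - 1)).coeff (n-1)) * ((X:P)^n - 1) := by
  set p : P := (X:P)^n - 1 with hp
  set f' := f %ₘ p with hf'
  set c := f'.coeff (n-1) with hc
  have h1 : (X * f) %ₘ p = (X * f') %ₘ p := by
    obtain ⟨q, hq⟩ : p ∣ (X * f - X * f') := by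
      rw [hf', Polynomial.modByMonic_eq_sub_mul_div f p]
      exact ⟨X * (f /ₘ p), by ring⟩
    have hXf : X * f = X * f' + p * q := by linear_combination hq
    rw [hXf, Polynomial.add_modByMonic,
      (Polynomial.modByMonic_eq_zero_iff_dvd (pmonic hn)).2 ⟨q, rfl⟩, add_zero]
  have h2 : (X * f') %ₘ p = (X * f' - Polynomial.C c * p) %ₘ p := by
    rw [show X * f' - Polynomial.C c * p = X * f' + p * (- Polynomial.C c) by ring,
      Polynomial.add_modByMonic,
      (Polynomial.modByMonic_eq_zero_iff_dvd (pmonic hn)).2 ⟨-Polynomial.C c, rfl⟩, add_zero]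
  have h3 : (X * f' - Polynomial.C c * p) %ₘ p = X * f' - Polynomial.C c * p := by
    rw [Polynomial.modByMonic_eq_self_iff (pmonic hn), pdegree hn]
    rw [Polynomial.degree_lt_iff_coeff_zero]
    intro m hm
    have hXf : (X * f').coeff m = f'.coeff (m-1) := by
      rcases Nat.exists_eq_succ_of_ne_zero (show m ≠ 0 by omega) with ⟨k, rfl⟩
      simp [Polynomial.coeff_X_mul]
    rw [Polynomial.coeff_sub, hXf, hp]
    simp only [Polynomial.coeff_C_mul, Polynomial.coeff_sub, Polynomial.coeff_X_pow,
      Polynomial.coeff_one]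
    rcases eq_or_lt_of_le hm with h | h
    · rw [← h]
      have hne : ¬ (n = 0) := by omega
      simp [hne, hc]
    · rw [mod_coeff_ge hn (show n ≤ m - 1 by omega)]
      have h1' : ¬ (m = n) := by omega
      have h2' : ¬ (m = 0) := by omega
      simp [h1', h2']
  rw [h1, h2, h3]

/-- The cyclic pairing `⟨f,g⟩ = Σ_{i<n} (f mod xⁿ−1)ᵢ (g mod xⁿ−1)ᵢ`. -/
noncomputable def Tp (n : ℕ) (f g : P) : F :=
  ∑ i ∈ range n, (f %ₘ ((X:P)^n - 1)).coeff i * (g %ₘ ((X:P)^n - 1)).coeff i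

/-- `x ↦ x⁻¹ = x^{n-1}` on exponents. -/
noncomputable def barA (n : ℕ) (a : P) : P := Polynomial.aeval ((X:P)^(n-1)) a

omit hn

lemma Tp_comm (f g : P) : Tp n f g = Tp n g f := by
  unfold Tp; exact Finset.sum_congr rfl fun i _ => mul_comm _ _

lemma Tp_add_left (f f' g : P) : Tp n (f + f') g = Tp n f g + Tp n f' g := by
  unfold Tp
  rw [Polynomial.add_modByMonic, ← Finset.sum_add_distrib]
  exact Finset.sum_congr rfl fun i _ => by simp [Polynomial.coeff_add, add_mul]

lemma Tp_add_right (f g g' : P) : Tp n f (g + g') = Tp n f g + Tp n f g' := by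
  rw [Tp_comm, Tp_add_left, Tp_comm, Tp_comm (f := g')]

lemma Tp_smul_left (c : F) (f g : P) : Tp n (Polynomial.C c * f) g = c * Tp n f g := by
  unfold Tp
  rw [show Polynomial.C c * f = c • f by simp [Polynomial.smul_eq_C_mul],
    Polynomial.smul_modByMonic, Finset.mul_sum]
  exact Finset.sum_congr rfl fun i _ => by simp [mul_assoc]

lemma Tp_smul_right (c : F) (f g : P) : Tp n f (Polynomial.C c * g) = c * Tp n f g := by
  rw [Tp_comm, Tp_smul_left, Tp_comm]

include hn in
lemma Tp_congr_left {f f' : P} (g : P) (h : ((X:P)^n - 1) ∣ f - f') :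
    Tp n f g = Tp n f' g := by
  unfold Tp; rw [mod_eq_of_dvd_sub hn h]

include hn in
lemma Tp_congr_right {g g' : P} (f : P) (h : ((X:P)^n - 1) ∣ g - g') :
    Tp n f g = Tp n f g' := by
  unfold Tp; rw [mod_eq_of_dvd_sub hn h]

include hn in
lemma Tp_zero_right (f g : P) (h : ((X:P)^n - 1) ∣ g) : Tp n f g = 0 := by
  unfold Tp
  rw [(Polynomial.modByMonic_eq_zero_iff_dvd (pmonic hn)).2 h]
  simp

include hn in
lemma key_coeff (h : P) {i : ℕ} (hi : i < n) :
    ((X * h) %ₘ ((X:P)^n - 1)).coeff i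
      = if i = 0 then (h %ₘ ((X:P)^n - 1)).coeff (n-1)
        else (h %ₘ ((X:P)^n - 1)).coeff (i-1) := by
  rw [shift_mod hn h]
  rcases Nat.eq_zero_or_pos i with rfl | hip
  · have h0 : (X * (h %ₘ ((X:P)^n - 1))).coeff 0 = 0 := by
      rw [Polynomial.mul_coeff_zero, Polynomial.coeff_X_zero, zero_mul]
    have hne : ¬ ((0:ℕ) = n) := by omega
    simp [Polynomial.coeff_sub, Polynomial.coeff_C_mul, Polynomial.coeff_X_pow,
      Polynomial.coeff_one, h0, hne]
  · obtain ⟨k, rfl⟩ := Nat.exists_eq_succ_of_ne_zero hip.ne'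
    have h1 : ¬ (k + 1 = n) := by omega
    have h2 : ¬ (k + 1 = 0) := by omega
    simp [Polynomial.coeff_sub, Polynomial.coeff_C_mul, Polynomial.coeff_X_pow,
      Polynomial.coeff_one, Polynomial.coeff_X_mul, h1, h2]

include hn in
lemma Tp_X_mul (f g : P) : Tp n (X * f) (X * g) = Tp n f g := by
  obtain ⟨m, rfl⟩ : ∃ m, n = m + 1 := ⟨n - 1, by omega⟩
  unfold Tp
  rw [Finset.sum_congr rfl (fun i hi => by
    rw [key_coeff hn f (mem_range.mp hi), key_coeff hn g (mem_range.mp hi)])]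
  rw [Finset.sum_range_succ' _ m, Finset.sum_range_succ _ m]
  simp only [if_pos rfl, Nat.succ_ne_zero, if_neg (Nat.succ_ne_zero _), Nat.add_sub_cancel,
    Nat.succ_sub_one]
  ring_nf
  rfl

include hn in
lemma Tp_Xn_right (f g : P) : Tp n f ((X:P)^n * g) = Tp n f g :=
  Tp_congr_right hn f ⟨g, by ring⟩

include hn in
lemma Tp_X_left (f g : P) : Tp n (X * f) g = Tp n f ((X:P)^(n-1) * g) := by
  obtain ⟨m, rfl⟩ : ∃ m, n = m + 1 := ⟨n - 1, by omega⟩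
  calc Tp (m+1) (X * f) g = Tp (m+1) (X * f) ((X:P)^(m+1) * g) := (Tp_Xn_right hn _ _).symm
    _ = Tp (m+1) (X * f) (X * ((X:P)^m * g)) := by
          rw [show ((X:P)^(m+1) * g) = X * ((X:P)^m * g) by ring]
    _ = Tp (m+1) f ((X:P)^m * g) := Tp_X_mul hn _ _
    _ = Tp (m+1) f ((X:P)^(m+1-1) * g) := by norm_num

include hn in
lemma Tp_pow_left (k : ℕ) (f g : P) :
    Tp n ((X:P)^k * f) g = Tp n f ((X:P)^(k*(n-1)) * g) := by
  induction k generalizing g with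
  | zero => simp
  | succ k ih =>
    have h1 : (X:P)^(k+1) * f = X * ((X:P)^k * f) := by ring
    rw [h1, Tp_X_left hn, ih, ← mul_assoc, ← pow_add]
    congr 2
    ring

include hn in
lemma Tp_mul_left (a f g : P) : Tp n (a * f) g = Tp n f (barA n a * g) := by
  induction a using Polynomial.induction_on' with
  | add p q hp hq =>
    rw [add_mul, Tp_add_left, hp, hq, ← Tp_add_right, ← add_mul]
    simp [barA]
  | monomial i c =>
    rw [← Polynomial.C_mul_X_pow_eq_monomial, barA, map_mul, Polynomial.aeval_C,
      Polynomial.aeval_X_pow, Polynomial.algebraMap_eq,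
      mul_assoc, Tp_smul_left, Tp_pow_left hn, mul_assoc, Tp_smul_right, ← pow_mul,
      Nat.mul_comm]

include hn in
lemma reverse_p : ((X:P)^n - 1).reverse = (X:P)^n - 1 := by
  have h1 : ((X:P)^n - 1) = (X:P)^n + 1 := by
    rw [sub_eq_add_neg, neg_eq']
  rw [h1]
  have hd : ((X:P)^n + 1).natDegree = n := by
    simpa using Polynomial.natDegree_X_pow_add_C (n := n) (r := (1:F))
  rw [Polynomial.reverse, hd, Polynomial.reflect_add, Polynomial.reflect_monomial,
    show (1:P) = Polynomial.C 1 by simp, Polynomial.reflect_C,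
    Polynomial.revAt_le (le_refl n)]
  simp [add_comm]

include hn in
lemma barA_key (g : P) :
    ((X:P)^n - 1) ∣ (X:P)^(g.natDegree) * barA n g - g.reverse := by
  set d := g.natDegree with hd
  have hsum : g = ∑ i ∈ range (d+1), Polynomial.C (g.coeff i) * X ^ i :=
    Polynomial.as_sum_range_C_mul_X_pow g
  have h1 : (X:P)^d * barA n g
      = ∑ i ∈ range (d+1), Polynomial.C (g.coeff i) * X ^ (d + (n-1)*i) := by
    rw [barA]
    conv_lhs => rw [hsum]
    rw [map_sum, Finset.mul_sum]
    refine Finset.sum_congr rfl fun i _ => ?_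
    rw [map_mul, Polynomial.aeval_C, Polynomial.aeval_X_pow, Polynomial.algebraMap_eq,
      ← pow_mul, pow_add]
    ring
  have h2 : g.reverse = ∑ i ∈ range (d+1), Polynomial.C (g.coeff i) * X ^ (d - i) := by
    rw [Polynomial.reverse, ← hd]
    conv_lhs => rw [hsum]
    rw [reflect_sum]
    refine Finset.sum_congr rfl fun i hi => ?_
    have hi' : i ≤ d := Nat.lt_succ_iff.mp (mem_range.mp hi)
    rw [Polynomial.reflect_C_mul_X_pow, Polynomial.revAt_le hi']
  rw [h1, h2, ← Finset.sum_sub_distrib]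
  refine Finset.dvd_sum fun i hi => ?_
  have hi' : i ≤ d := Nat.lt_succ_iff.mp (mem_range.mp hi)
  have hexp : d + (n-1)*i = (d - i) + n*i := by
    have h3 : (n-1)*i = n*i - i := by rw [Nat.sub_mul, one_mul]
    have h4 : i ≤ n * i := Nat.le_mul_of_pos_left i hn
    omega
  have hdvd : ((X:P)^n - 1) ∣ (X:P)^(n*i) - 1 := by
    rw [pow_mul]
    simpa using sub_dvd_pow_sub_pow ((X:P)^n) 1 i
  obtain ⟨q, hq⟩ := hdvd
  refine ⟨Polynomial.C (g.coeff i) * X^(d-i) * q, ?_⟩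
  rw [hexp, pow_add]
  linear_combination (Polynomial.C (g.coeff i) * X^(d-i)) * hq

include hn in
lemma barA_barPoly {v : P} (hv : v.natDegree < n) :
    ((X:P)^n - 1) ∣ barA n v - barPoly n v := by
  have hsum : v = ∑ i ∈ range n, Polynomial.C (v.coeff i) * X ^ i := by
    have := Polynomial.as_sum_range' v n hv
    simpa [Polynomial.C_mul_X_pow_eq_monomial] using this
  have h1 : barA n v = ∑ i ∈ range n, Polynomial.C (v.coeff i) * X ^ ((n-1)*i) := by
    rw [barA]
    conv_lhs => rw [hsum]
    rw [map_sum]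
    refine Finset.sum_congr rfl fun i _ => ?_
    rw [map_mul, Polynomial.aeval_C, Polynomial.aeval_X_pow, Polynomial.algebraMap_eq,
      ← pow_mul]
  have h2 : barPoly n v
      = ∑ i ∈ range n, Polynomial.C (v.coeff i) * X ^ (if i = 0 then 0 else n - i) := by
    rw [barPoly]
    refine Finset.sum_nbij' (fun i => if i = 0 then 0 else n - i)
      (fun i => if i = 0 then 0 else n - i) ?_ ?_ ?_ ?_ ?_
    · intro i hi
      simp only [mem_range] at hi ⊢
      split <;> omega
    · intro i hi
      simp only [mem_range] at hi ⊢
      split <;> omega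
    · intro i hi
      simp only [mem_range] at hi
      rcases Nat.eq_zero_or_pos i with rfl | hip
      · simp
      · beta_reduce
        rw [if_neg hip.ne']
        have : ¬ (n - i = 0) := by omega
        rw [if_neg this]
        omega
    · intro i hi
      simp only [mem_range] at hi
      rcases Nat.eq_zero_or_pos i with rfl | hip
      · simp
      · beta_reduce
        rw [if_neg hip.ne']
        have : ¬ (n - i = 0) := by omega
        rw [if_neg this]
        omega
    · intro i hi
      simp only [mem_range] at hi
      rcases Nat.eq_zero_or_pos i with rfl | hip
      · simp
      · beta_reduce
        rw [if_neg hip.ne']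
        have hni : ¬ (n - i = 0) := by omega
        rw [if_neg hni]
        congr 2
        omega
  rw [h1, h2, ← Finset.sum_sub_distrib]
  refine Finset.dvd_sum fun i hi => ?_
  simp only [mem_range] at hi
  rcases Nat.eq_zero_or_pos i with rfl | hip
  · simp
  · rw [if_neg hip.ne']
    have hexp : (n-1)*i = (n - i) + n*(i-1) := by
      have h3 : (n-1)*i = n*i - i := by rw [Nat.sub_mul, one_mul]
      have h4 : n*(i-1) = n*i - n := by rw [Nat.mul_sub, mul_one]
      have h5 : i ≤ n * i := Nat.le_mul_of_pos_left i hn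
      have h6 : n ≤ n * i := Nat.le_mul_of_pos_right n hip
      omega
    have hdvd : ((X:P)^n - 1) ∣ (X:P)^(n*(i-1)) - 1 := by
      rw [pow_mul]
      simpa using sub_dvd_pow_sub_pow ((X:P)^n) 1 (i-1)
    obtain ⟨q, hq⟩ := hdvd
    refine ⟨Polynomial.C (v.coeff i) * X^(n-i) * q, ?_⟩
    rw [hexp, pow_add]
    linear_combination (Polynomial.C (v.coeff i) * X^(n-i)) * hq

include hn in
lemma Tp_kill {g h : P} (hgh : g * h = (X:P)^n - 1) (s t : P) :
    Tp n (g * s) (t * h.reverse) = 0 := by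
  have hgne : g ≠ 0 := fun h0 => pne hn (by rw [← hgh, h0, zero_mul])
  have hhne : h ≠ 0 := fun h0 => pne hn (by rw [← hgh, h0, mul_zero])
  have hrev : g.reverse * h.reverse = (X:P)^n - 1 := by
    rw [← Polynomial.reverse_mul_of_domain, hgh, reverse_p hn]
  obtain ⟨q, hq⟩ := barA_key hn g
  have h1 : ((X:P)^n - 1) ∣ (X:P)^(g.natDegree) * (barA n g * h.reverse) := by
    refine ⟨q * h.reverse + 1, ?_⟩
    linear_combination h.reverse * hq + hrev
  have hcopX : IsCoprime ((X:P)) ((X:P)^n - 1) := by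
    refine ⟨X^(n-1), -1, ?_⟩
    have hx : (X:P)^(n-1) * X = X^n := by
      rw [← pow_succ]; congr 1; omega
    linear_combination hx
  have hcop : IsCoprime ((X:P)^n - 1) ((X:P)^(g.natDegree)) :=
    (IsCoprime.pow_left (m := g.natDegree) hcopX).symm
  have h2 : ((X:P)^n - 1) ∣ barA n g * h.reverse :=
    hcop.dvd_of_dvd_mul_left h1
  rw [Tp_mul_left hn g s]
  refine Tp_zero_right hn _ _ ?_
  have : barA n g * (t * h.reverse) = t * (barA n g * h.reverse) := by ring
  rw [this]
  exact h2.mul_left t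

include hn in
lemma Tp_vswap {v : P} (hv : v.natDegree < n) (hbar : barPoly n v = v) (f g : P) :
    Tp n (v * f) g = Tp n f (v * g) := by
  rw [Tp_mul_left hn]
  refine Tp_congr_right hn f ?_
  have h := barA_barPoly hn hv
  rw [hbar] at h
  obtain ⟨q, hq⟩ := h
  exact ⟨q * g, by linear_combination g * hq⟩

end

end Stmt7Aux

namespace Stmt7Aux

open Finset

section
variable {n : ℕ} (hn : 0 < n)
set_option linter.unusedSectionVars false

lemma cwL_apply (g₁ g₂ v a b : P) :
    cwL n g₁ g₂ v (a, b)
      = (vecL n ((a * (v * g₁) + b * g₂) %ₘ ((X:P)^n - 1)),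
         vecL n ((a * g₁ + b * (v * g₂)) %ₘ ((X:P)^n - 1))) := rfl

lemma vecL_apply (f : P) (i : Fin n) : vecL n f i = f.coeff i := rfl

include hn in
lemma vecL_mod_eq_zero_iff {f : P} :
    vecL n (f %ₘ ((X:P)^n - 1)) = 0 ↔ ((X:P)^n - 1) ∣ f := by
  constructor
  · intro h
    rw [← Polynomial.modByMonic_eq_zero_iff_dvd (pmonic hn)]
    ext k
    rcases lt_or_ge k n with hk | hk
    · have := congrFun h ⟨k, hk⟩
      simpa [vecL_apply] using this
    · simp [mod_coeff_ge hn hk]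
  · intro h
    rw [(Polynomial.modByMonic_eq_zero_iff_dvd (pmonic hn)).2 h]
    rfl

lemma einner_eq_Tp (f g : P) :
    einner n (vecL n (f %ₘ ((X:P)^n - 1))) (vecL n (g %ₘ ((X:P)^n - 1))) = Tp n f g := by
  unfold einner Tp
  simp only [vecL_apply]
  rw [Fin.sum_univ_eq_sum_range
    (fun i => (f %ₘ ((X:P)^n - 1)).coeff i * (g %ₘ ((X:P)^n - 1)).coeff i)]

lemma sinner_split (u w : (Fin n → F) × (Fin n → F)) :
    sinner n u w = einner n u.1 w.2 - einner n u.2 w.1 := by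
  unfold sinner einner
  rw [Finset.sum_sub_distrib]

include hn in
lemma orth_main {g₁ g₂ v h₁ h₂ : P} (hdegv : v.natDegree < n)
    (he₁ : g₁ * h₁ = (X:P)^n - 1) (he₂ : g₂ * h₂ = (X:P)^n - 1)
    (hbar : barPoly n v = v) (a b c d : P) :
    sinner n (cwL n g₁ g₂ v (a, b)) (cwL n h₂.reverse h₁.reverse v (c, d)) = 0 := by
  set A := h₂.reverse
  set B := h₁.reverse
  rw [cwL_apply, cwL_apply, sinner_split, einner_eq_Tp, einner_eq_Tp]
  rw [Tp_add_left, Tp_add_left, Tp_add_right, Tp_add_right, Tp_add_right, Tp_add_right]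
  have k1 : Tp n (a * (v * g₁)) (d * (v * B)) = 0 := by
    rw [show a * (v * g₁) = g₁ * (a * v) by ring, show d * (v * B) = (d * v) * B by ring]
    exact Tp_kill hn he₁ _ _
  have k2 : Tp n (a * g₁) (d * B) = 0 := by
    rw [show a * g₁ = g₁ * a by ring]
    exact Tp_kill hn he₁ _ _
  have k3 : Tp n (b * g₂) (c * A) = 0 := by
    rw [show b * g₂ = g₂ * b by ring]
    exact Tp_kill hn he₂ _ _
  have k4 : Tp n (b * (v * g₂)) (c * (v * A)) = 0 := by
    rw [show b * (v * g₂) = g₂ * (b * v) by ring, show c * (v * A) = (c * v) * A by ring]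
    exact Tp_kill hn he₂ _ _
  have s1 : Tp n (a * (v * g₁)) (c * A) = Tp n (a * g₁) (c * (v * A)) := by
    rw [show a * (v * g₁) = v * (a * g₁) by ring, Tp_vswap hn hdegv hbar,
      show v * (c * A) = c * (v * A) by ring]
  have s2 : Tp n (b * (v * g₂)) (d * B) = Tp n (b * g₂) (d * (v * B)) := by
    rw [show b * (v * g₂) = v * (b * g₂) by ring, Tp_vswap hn hdegv hbar,
      show v * (d * B) = d * (v * B) by ring]
  rw [k1, k2, k3, k4, s1, s2]
  ring

/-- polynomials of degree < m from coefficient vectors -/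
noncomputable def polyOf (m : ℕ) : (Fin m → F) →ₗ[F] P :=
  (Polynomial.degreeLT F m).subtype.comp
    (Polynomial.degreeLTEquiv F m).symm.toLinearMap

lemma polyOf_degree (m : ℕ) (α : Fin m → F) : (polyOf m α).degree < m := by
  have := ((Polynomial.degreeLTEquiv F m).symm α).2
  rwa [Polynomial.mem_degreeLT] at this

lemma polyOf_inj {m : ℕ} : Function.Injective (polyOf m) := by
  intro α β h
  have := Subtype.ext (p := fun f => f ∈ Polynomial.degreeLT F m) h
  exact (Polynomial.degreeLTEquiv F m).symm.injective this

lemma polyOf_surj {m : ℕ} {f : P} (hf : f.degree < m) : ∃ α, polyOf m α = f := by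
  refine ⟨Polynomial.degreeLTEquiv F m ⟨f, Polynomial.mem_degreeLT.2 hf⟩, ?_⟩
  simp [polyOf]

end
end Stmt7Aux

namespace Stmt7Aux

open Finset Module

section
variable {n : ℕ} (hn : 0 < n)
set_option linter.unusedSectionVars false

lemma zmod2_eq_one {a : F} (h : a ≠ 0) : a = 1 :=
  (by decide : ∀ a : F, a ≠ 0 → a = 1) a h

include hn in
lemma cofactor_monic {g h : P} (hgh : g * h = (X:P)^n - 1) : h.Monic := by
  have hne : h ≠ 0 := fun h0 => pne hn (by rw [← hgh, h0, mul_zero])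
  exact zmod2_eq_one (Polynomial.leadingCoeff_ne_zero.mpr hne)

include hn in
lemma deg_add {g h : P} (hgh : g * h = (X:P)^n - 1) :
    g.natDegree + h.natDegree = n := by
  have hgne : g ≠ 0 := fun h0 => pne hn (by rw [← hgh, h0, zero_mul])
  have hhne : h ≠ 0 := fun h0 => pne hn (by rw [← hgh, h0, mul_zero])
  rw [← Polynomial.natDegree_mul hgne hhne, hgh, pdeg]

include hn in
lemma cwL_zero_of_dvd {g g' v s t : P} {h h' : P}
    (he : g * h = (X:P)^n - 1) (he' : g' * h' = (X:P)^n - 1)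
    (hs : h ∣ s) (ht : h' ∣ t) : cwL n g g' v (s, t) = 0 := by
  obtain ⟨k, rfl⟩ := hs
  obtain ⟨k', rfl⟩ := ht
  rw [cwL_apply]
  have d1 : ((X:P)^n - 1) ∣ (h * k) * (v * g) + (h' * k') * g' := by
    refine dvd_add ⟨v * k, by linear_combination (v*k) * he⟩ ⟨k', by linear_combination k' * he'⟩
  have d2 : ((X:P)^n - 1) ∣ (h * k) * g + (h' * k') * (v * g') := by
    refine dvd_add ⟨k, by linear_combination k * he⟩ ⟨v * k', by linear_combination (v*k') * he'⟩
  rw [Prod.mk_eq_zero]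
  exact ⟨(vecL_mod_eq_zero_iff hn).2 d1, (vecL_mod_eq_zero_iff hn).2 d2⟩

include hn in
lemma finrank_QC {g g' h h' v : P}
    (he : g * h = (X:P)^n - 1) (he' : g' * h' = (X:P)^n - 1)
    (hv : IsCoprime (v - 1) ((X:P)^n - 1)) :
    finrank F (LinearMap.range (cwL n g g' v)) = h.natDegree + h'.natDegree := by
  classical
  have hgne : g ≠ 0 := fun h0 => pne hn (by rw [← he, h0, zero_mul])
  have hg'ne : g' ≠ 0 := fun h0 => pne hn (by rw [← he', h0, zero_mul])
  have hhne : h ≠ 0 := fun h0 => pne hn (by rw [← he, h0, mul_zero])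
  have hh'ne : h' ≠ 0 := fun h0 => pne hn (by rw [← he', h0, mul_zero])
  have hhm : h.Monic := cofactor_monic hn he
  have hh'm : h'.Monic := cofactor_monic hn he'
  set Φ : ((Fin h.natDegree → F) × (Fin h'.natDegree → F)) →ₗ[F]
      ((Fin n → F) × (Fin n → F)) :=
    (cwL n g g' v).comp ((polyOf h.natDegree).prodMap (polyOf h'.natDegree)) with hΦ
  -- the ranges agree
  have hrange : LinearMap.range Φ = LinearMap.range (cwL n g g' v) := by
    apply le_antisymm
    · rintro x ⟨y, rfl⟩
      exact ⟨_, rfl⟩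
    · rintro x ⟨⟨a, b⟩, rfl⟩
      have hda : (a %ₘ h).degree < (h.natDegree : ℕ) := by
        have := Polynomial.degree_modByMonic_lt a hhm
        rwa [Polynomial.degree_eq_natDegree hhne] at this
      have hdb : (b %ₘ h').degree < (h'.natDegree : ℕ) := by
        have := Polynomial.degree_modByMonic_lt b hh'm
        rwa [Polynomial.degree_eq_natDegree hh'ne] at this
      obtain ⟨α, hα⟩ := polyOf_surj hda
      obtain ⟨β, hβ⟩ := polyOf_surj hdb
      refine ⟨(α, β), ?_⟩
      have hsplit : cwL n g g' v (a, b)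
          = cwL n g g' v (a %ₘ h, b %ₘ h') + cwL n g g' v (a - a %ₘ h, b - b %ₘ h') := by
        rw [← map_add]
        congr 1
        simp [Prod.ext_iff]
      have hz : cwL n g g' v (a - a %ₘ h, b - b %ₘ h') = 0 := by
        refine cwL_zero_of_dvd hn he he' ?_ ?_
        · rw [Polynomial.modByMonic_eq_sub_mul_div a h]
          exact ⟨a /ₘ h, by ring⟩
        · rw [Polynomial.modByMonic_eq_sub_mul_div b h']
          exact ⟨b /ₘ h', by ring⟩
      simp only [hΦ, LinearMap.comp_apply, LinearMap.prodMap_apply, hα, hβ]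
      rw [hsplit, hz, add_zero]
  -- Φ is injective
  have hinj : Function.Injective Φ := by
    rw [injective_iff_map_eq_zero]
    rintro ⟨α, β⟩ hz
    simp only [hΦ, LinearMap.comp_apply, LinearMap.prodMap_apply] at hz
    set a := polyOf h.natDegree α with ha
    set b := polyOf h'.natDegree β with hb
    rw [cwL_apply, Prod.mk_eq_zero] at hz
    have e1 : ((X:P)^n - 1) ∣ a * (v * g) + b * g' := (vecL_mod_eq_zero_iff hn).1 hz.1
    have e2 : ((X:P)^n - 1) ∣ a * g + b * (v * g') := (vecL_mod_eq_zero_iff hn).1 hz.2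
    have hvv : IsCoprime ((v - 1) * (v + 1)) ((X:P)^n - 1) := by
      have : v + 1 = v - 1 := by
        rw [sub_eq_add_neg, neg_eq']
      rw [this]
      exact hv.mul_left hv
    have e3 : ((X:P)^n - 1) ∣ ((v - 1) * (v + 1)) * (a * g) := by
      obtain ⟨q1, hq1⟩ := e1
      obtain ⟨q2, hq2⟩ := e2
      exact ⟨v * q1 - q2, by linear_combination v * hq1 - hq2⟩
    have e4 : ((X:P)^n - 1) ∣ a * g := (hvv.symm).dvd_of_dvd_mul_left e3
    have hha : h ∣ a := by
      obtain ⟨q, hq⟩ := e4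
      refine ⟨q, mul_left_cancel₀ hgne ?_⟩
      linear_combination hq - q * he
    have haz : a = 0 := by
      rcases eq_or_ne a 0 with h0 | h0
      · exact h0
      · exact absurd (Polynomial.degree_le_of_dvd hha h0)
          (not_le_of_gt (lt_of_lt_of_le (polyOf_degree _ α)
            (by rw [Polynomial.degree_eq_natDegree hhne])))
    have e5 : ((X:P)^n - 1) ∣ b * g' := by
      have h1 := e1
      rw [haz] at h1
      simpa using h1
    have hhb : h' ∣ b := by
      obtain ⟨q, hq⟩ := e5
      refine ⟨q, mul_left_cancel₀ hg'ne ?_⟩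
      linear_combination hq - q * he'
    have hbz : b = 0 := by
      rcases eq_or_ne b 0 with h0 | h0
      · exact h0
      · exact absurd (Polynomial.degree_le_of_dvd hhb h0)
          (not_le_of_gt (lt_of_lt_of_le (polyOf_degree _ β)
            (by rw [Polynomial.degree_eq_natDegree hh'ne])))
    rw [Prod.mk_eq_zero]
    constructor
    · apply polyOf_inj
      rw [map_zero, ← ha]
      exact haz
    · apply polyOf_inj
      rw [map_zero, ← hb]
      exact hbz
  rw [← hrange, LinearMap.finrank_range_of_inj hinj]
  simp [Module.finrank_prod]

end
end Stmt7Aux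

namespace Stmt7Aux

open Finset Module

section
variable {n : ℕ} (hn : 0 < n)
set_option linter.unusedSectionVars false

include hn in
lemma rev_mul_eq {g h : P} (hgh : g * h = (X:P)^n - 1) :
    g.reverse * h.reverse = (X:P)^n - 1 := by
  rw [← Polynomial.reverse_mul_of_domain, hgh, reverse_p hn]

include hn in
lemma pcoeff0 : ((X:P)^n - 1).coeff 0 = 1 := by
  rw [Polynomial.coeff_sub, Polynomial.coeff_X_pow, Polynomial.coeff_one]
  have : ¬ ((0:ℕ) = n) := by omega
  simp [this]

include hn in
lemma const_coeff_ne {g h : P} (hgh : g * h = (X:P)^n - 1) : g.coeff 0 ≠ 0 := by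
  intro h0
  have := Polynomial.mul_coeff_zero g h
  rw [hgh, pcoeff0 hn, h0, zero_mul] at this
  exact one_ne_zero this

lemma natDeg_rev {g : P} (h0 : g.coeff 0 ≠ 0) : g.reverse.natDegree = g.natDegree := by
  rw [Polynomial.reverse_natDegree]
  have : g.natTrailingDegree = 0 :=
    Polynomial.natTrailingDegree_eq_zero.mpr (Or.inr h0)
  omega

/-- The symplectic form as a bilinear form. -/
noncomputable def Bsym (n : ℕ) :
    LinearMap.BilinForm F ((Fin n → F) × (Fin n → F)) :=
  LinearMap.mk₂ F (sinner n)
    (by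
      intro u u' w
      unfold sinner
      rw [← Finset.sum_add_distrib]
      exact Finset.sum_congr rfl fun i _ => by
        simp only [Prod.fst_add, Prod.snd_add, Pi.add_apply]; ring)
    (by
      intro c u w
      unfold sinner
      rw [smul_eq_mul, Finset.mul_sum]
      exact Finset.sum_congr rfl fun i _ => by
        simp only [Prod.smul_fst, Prod.smul_snd, Pi.smul_apply, smul_eq_mul]; ring)
    (by
      intro u w w'
      unfold sinner
      rw [← Finset.sum_add_distrib]
      exact Finset.sum_congr rfl fun i _ => by
        simp only [Prod.fst_add, Prod.snd_add, Pi.add_apply]; ring)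
    (by
      intro c u w
      unfold sinner
      rw [smul_eq_mul, Finset.mul_sum]
      exact Finset.sum_congr rfl fun i _ => by
        simp only [Prod.smul_fst, Prod.smul_snd, Pi.smul_apply, smul_eq_mul]; ring)

lemma Bsym_apply (u w : (Fin n → F) × (Fin n → F)) : Bsym n u w = sinner n u w := rfl

lemma sympDual_eq_orth (C : Submodule F ((Fin n → F) × (Fin n → F))) :
    sympDual n C = (Bsym n).orthogonal C := by
  ext w
  constructor
  · intro hw u hu
    exact hw u hu
  · intro hw u hu
    exact hw u hu

lemma Bsym_nondeg : (Bsym n).Nondegenerate := by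
  have hR : (Bsym n).IsRefl := by
    intro x y h
    rw [Bsym_apply] at h ⊢
    have : sinner n y x = - sinner n x y := by
      unfold sinner
      rw [← Finset.sum_neg_distrib]
      exact Finset.sum_congr rfl fun i _ => by ring
    rw [this, h, neg_zero]
  refine (LinearMap.IsRefl.nondegenerate_iff_separatingLeft hR).2 ?_
  intro u h
  have h1 : ∀ i, u.1 i = 0 := by
    intro i
    have := h (0, Pi.single i 1)
    rw [Bsym_apply] at this
    unfold sinner at this
    simpa [Pi.single_apply, mul_ite, Finset.sum_ite_eq'] using this
  have h2 : ∀ i, u.2 i = 0 := by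
    intro i
    have := h (Pi.single i 1, 0)
    rw [Bsym_apply] at this
    unfold sinner at this
    have h3 : ∑ j, (u.1 j * (0:Fin n → F) j - u.2 j * (Pi.single i (1:F) : Fin n → F) j) = - u.2 i := by
      simp [Pi.single_apply, mul_ite, Finset.sum_ite_eq']
    rw [h3] at this
    simpa using this
  have : u = (0, 0) := by
    apply Prod.ext <;> funext i
    · exact h1 i
    · exact h2 i
  exact this

lemma Bsym_refl : (Bsym n).IsRefl := by
  intro x y h
  rw [Bsym_apply] at h ⊢
  have : sinner n y x = - sinner n x y := by
    unfold sinner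
    rw [← Finset.sum_neg_distrib]
    exact Finset.sum_congr rfl fun i _ => by ring
  rw [this, h, neg_zero]

lemma finrank_sympDual (C : Submodule F ((Fin n → F) × (Fin n → F))) :
    finrank F (sympDual n C) = (n + n) - finrank F C := by
  rw [sympDual_eq_orth, LinearMap.BilinForm.finrank_orthogonal Bsym_nondeg C]
  congr 1
  simp [Module.finrank_prod]

end
end Stmt7Aux

/-- if `g₂ ∣ g₁^⊥` (with `g₁^⊥ = h₁.reverse`) and `v̄ = v`, then
`C(g₁,g₂,v)` is symplectic dual-containing, i.e. `C(g₁,g₂,v)^⊥ₛ ⊆ C(g₁,g₂,v)`. -/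
theorem stmt_7 (n : ℕ) (hn : 0 < n) (g₁ g₂ v h₁ h₂ : Polynomial (ZMod 2))
    (hdeg₁ : g₁.natDegree < n) (hdeg₂ : g₂.natDegree < n) (hdegv : v.natDegree < n)
    (he₁ : g₁ * h₁ = X ^ n - 1) (he₂ : g₂ * h₂ = X ^ n - 1)
    (hcop : IsCoprime g₁ g₂) (hvcop : IsCoprime (v - 1) (X ^ n - 1))
    (hdvd : g₂ ∣ h₁.reverse) (hbar : barPoly n v = v) :
    sympDual n (QCCode n g₁ g₂ v) ≤ QCCode n g₁ g₂ v := by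
  classical
  open Stmt7Aux in
  have hpne : ((X:Stmt7Aux.P)^n - 1) ≠ 0 := Stmt7Aux.pne hn
  have hg₂ne : g₂ ≠ 0 := fun h0 => hpne (by rw [← he₂, h0, zero_mul])
  have hg₁0 : g₁.coeff 0 ≠ 0 := Stmt7Aux.const_coeff_ne hn he₁
  have hg₂0 : g₂.coeff 0 ≠ 0 := Stmt7Aux.const_coeff_ne hn he₂
  obtain ⟨t, ht⟩ := hdvd
  -- h₂ = g₁.reverse-cofactor
  have hrev₁ : g₁.reverse * h₁.reverse = (X:Stmt7Aux.P)^n - 1 := Stmt7Aux.rev_mul_eq hn he₁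
  have hh₂ : h₂ = g₁.reverse * t := by
    apply mul_left_cancel₀ hg₂ne
    rw [he₂, ← hrev₁, ht]
    ring
  have hA2 : h₂.reverse = g₁ * t.reverse := by
    rw [hh₂, Polynomial.reverse_mul_of_domain, Stmt7Aux.rev_rev hg₁0]
  -- the candidate dual code
  set A := h₂.reverse with hA
  set B := h₁.reverse with hB
  set D := LinearMap.range (cwL n A B v) with hD
  have hDA : A * g₂.reverse = (X:Stmt7Aux.P)^n - 1 := by
    rw [hA]
    exact Stmt7Aux.rev_mul_eq hn (by linear_combination he₂)
  have hDB : B * g₁.reverse = (X:Stmt7Aux.P)^n - 1 := by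
    rw [hB]
    exact Stmt7Aux.rev_mul_eq hn (by linear_combination he₁)
  -- finrank computations
  have hfC : Module.finrank (ZMod 2) (QCCode n g₁ g₂ v)
      = h₁.natDegree + h₂.natDegree := Stmt7Aux.finrank_QC hn he₁ he₂ hvcop
  have hfD : Module.finrank (ZMod 2) D
      = (g₂.reverse).natDegree + (g₁.reverse).natDegree :=
    Stmt7Aux.finrank_QC hn hDA hDB hvcop
  have hr₁ : (g₁.reverse).natDegree = g₁.natDegree := Stmt7Aux.natDeg_rev hg₁0
  have hr₂ : (g₂.reverse).natDegree = g₂.natDegree := Stmt7Aux.natDeg_rev hg₂0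
  have hs₁ : g₁.natDegree + h₁.natDegree = n := Stmt7Aux.deg_add hn he₁
  have hs₂ : g₂.natDegree + h₂.natDegree = n := Stmt7Aux.deg_add hn he₂
  -- D ≤ C
  have hDC : D ≤ QCCode n g₁ g₂ v := by
    rintro w ⟨⟨c, d⟩, rfl⟩
    refine ⟨(c * t.reverse, d * t), ?_⟩
    rw [Stmt7Aux.cwL_apply, Stmt7Aux.cwL_apply]
    have e1 : (c * t.reverse) * (v * g₁) + (d * t) * g₂ = c * (v * A) + d * B := by
      rw [hA2, ht]
      ring
    have e2 : (c * t.reverse) * g₁ + (d * t) * (v * g₂) = c * A + d * (v * B) := by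
      rw [hA2, ht]
      ring
    rw [e1, e2]
  -- D ≤ sympDual C
  have hDS : D ≤ sympDual n (QCCode n g₁ g₂ v) := by
    rintro w ⟨⟨c, d⟩, rfl⟩
    have hmem : ∀ u ∈ QCCode n g₁ g₂ v, sinner n u (cwL n A B v (c, d)) = 0 := by
      rintro u ⟨⟨a, b⟩, rfl⟩
      exact Stmt7Aux.orth_main hn hdegv he₁ he₂ hbar a b c d
    exact hmem
  -- finrank equality and conclusion
  have hfS : Module.finrank (ZMod 2) (sympDual n (QCCode n g₁ g₂ v))
      = (n + n) - Module.finrank (ZMod 2) (QCCode n g₁ g₂ v) :=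
    Stmt7Aux.finrank_sympDual _
  have hle : Module.finrank (ZMod 2) (sympDual n (QCCode n g₁ g₂ v))
      ≤ Module.finrank (ZMod 2) D := by
    omega
  have heq : D = sympDual n (QCCode n g₁ g₂ v) :=
    Submodule.eq_of_le_of_finrank_le hDS hle
  rw [← heq]
  exact hDC
end
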